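/- There exists a constant A > 0, depending only on B, B_L, C_V and M, such that for every T > 0, every N ≥ 2, every interacting SVGD system (X_n^{(i)}) with N particles and potential gradient h together with its mirrored mean-field particles (Z_n^{(j)}), and every n ∈ ℕ with n·γ ≤ T: ((1/N)·Σ_{j=1}^N E‖X_n^{(j)} − Z_n^{(j)}‖²)^{1/2} ≤ (1/2)·(Var(ρ₀)^{1/2}/√N)·e^{A·T}·(e^{2·A·T} − 1), where m(ρ₀) := ∫_E x dρ₀(x) and Var(ρ₀) := ∫_E ‖x − m(ρ₀)‖² dρ₀(x). -/

import Mathlib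

open MeasureTheory ProbabilityTheory
open scoped ENNReal

noncomputable section

section Helpers

variable {α : Type*} [MeasurableSpace α] {μ : Measure α}

lemma rpow_two_eq (y : ℝ) : y ^ (2:ℝ) = y ^ 2 := by
  rw [show (2:ℝ) = ((2:ℕ):ℝ) by norm_num, Real.rpow_natCast]

lemma integral_mul_le_sqrt_mul_sqrt (f g : α → ℝ) (hf0 : ∀ x, 0 ≤ f x) (hg0 : ∀ x, 0 ≤ g x)
    (hf : MemLp f 2 μ) (hg : MemLp g 2 μ) :
    ∫ x, f x * g x ∂μ ≤ Real.sqrt (∫ x, f x ^ 2 ∂μ) * Real.sqrt (∫ x, g x ^ 2 ∂μ) := by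
  have hconj : Real.HolderConjugate 2 2 := Real.HolderConjugate.two_two
  have h2 : ENNReal.ofReal (2:ℝ) = 2 := by simp [ENNReal.ofReal_ofNat]
  have h := integral_mul_le_Lp_mul_Lq_of_nonneg hconj (ae_of_all μ hf0) (ae_of_all μ hg0)
    (by rwa [h2]) (by rwa [h2])
  simp only [rpow_two_eq] at h
  calc ∫ x, f x * g x ∂μ ≤ (∫ a, f a ^ 2 ∂μ) ^ (1/(2:ℝ)) * (∫ a, g a ^ 2 ∂μ) ^ (1/(2:ℝ)) := h
  _ = Real.sqrt (∫ x, f x ^ 2 ∂μ) * Real.sqrt (∫ x, g x ^ 2 ∂μ) := by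
      rw [Real.sqrt_eq_rpow, Real.sqrt_eq_rpow]

lemma sqrt_integral_add_sq_le {f g : α → ℝ} (hf0 : ∀ x, 0 ≤ f x) (hg0 : ∀ x, 0 ≤ g x)
    (hf : MemLp f 2 μ) (hg : MemLp g 2 μ) :
    Real.sqrt (∫ x, (f x + g x) ^ 2 ∂μ) ≤
      Real.sqrt (∫ x, f x ^ 2 ∂μ) + Real.sqrt (∫ x, g x ^ 2 ∂μ) := by
  have hfg : Integrable (fun x => f x * g x) μ := by
    have h := ((hf.add hg).integrable_sq.sub hf.integrable_sq).sub hg.integrable_sq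
    have h2 := h.const_mul (1/2)
    exact h2.congr (ae_of_all _ fun x => by simp only [Pi.sub_apply, Pi.add_apply]; ring)
  have hf2 : Integrable (fun x => f x ^ 2) μ := hf.integrable_sq
  have hg2 : Integrable (fun x => g x ^ 2) μ := hg.integrable_sq
  have heq : ∀ x, (f x + g x) ^ 2 = f x ^ 2 + 2 * (f x * g x) + g x ^ 2 := fun x => by ring
  have hexp : ∫ x, (f x + g x) ^ 2 ∂μ
      = ∫ x, f x ^ 2 ∂μ + 2 * ∫ x, f x * g x ∂μ + ∫ x, g x ^ 2 ∂μ := by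
    calc ∫ x, (f x + g x) ^ 2 ∂μ
        = ∫ x, (f x ^ 2 + 2 * (f x * g x) + g x ^ 2) ∂μ := by simp_rw [heq]
      _ = ∫ x, (f x ^ 2 + 2 * (f x * g x)) ∂μ + ∫ x, g x ^ 2 ∂μ :=
          integral_add (hf2.add (hfg.const_mul 2)) hg2
      _ = (∫ x, f x ^ 2 ∂μ + ∫ x, 2 * (f x * g x) ∂μ) + ∫ x, g x ^ 2 ∂μ := by
          rw [integral_add hf2 (hfg.const_mul 2)]
      _ = ∫ x, f x ^ 2 ∂μ + 2 * ∫ x, f x * g x ∂μ + ∫ x, g x ^ 2 ∂μ := by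
          rw [integral_const_mul]
  have hcs := integral_mul_le_sqrt_mul_sqrt f g hf0 hg0 hf hg
  have h1 : 0 ≤ ∫ x, f x ^ 2 ∂μ := integral_nonneg fun x => sq_nonneg _
  have h2 : 0 ≤ ∫ x, g x ^ 2 ∂μ := integral_nonneg fun x => sq_nonneg _
  have hle : ∫ x, (f x + g x) ^ 2 ∂μ ≤
      (Real.sqrt (∫ x, f x ^ 2 ∂μ) + Real.sqrt (∫ x, g x ^ 2 ∂μ)) ^ 2 := by
    rw [hexp, add_sq, Real.sq_sqrt h1, Real.sq_sqrt h2]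
    nlinarith [hcs]
  calc Real.sqrt (∫ x, (f x + g x) ^ 2 ∂μ)
      ≤ Real.sqrt ((Real.sqrt (∫ x, f x ^ 2 ∂μ) + Real.sqrt (∫ x, g x ^ 2 ∂μ)) ^ 2) :=
        Real.sqrt_le_sqrt hle
    _ = _ := Real.sqrt_sq (by positivity)

lemma sqrt_sum_add_sq_le {ι : Type*} {s : Finset ι} (f g : ι → ℝ)
    (hf0 : ∀ i, 0 ≤ f i) (hg0 : ∀ i, 0 ≤ g i) :
    Real.sqrt (∑ i ∈ s, (f i + g i) ^ 2) ≤
      Real.sqrt (∑ i ∈ s, f i ^ 2) + Real.sqrt (∑ i ∈ s, g i ^ 2) := by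
  have hcs2 := Finset.sum_mul_sq_le_sq_mul_sq s f g
  have h1 : 0 ≤ ∑ i ∈ s, f i ^ 2 := Finset.sum_nonneg fun i _ => sq_nonneg _
  have h2 : 0 ≤ ∑ i ∈ s, g i ^ 2 := Finset.sum_nonneg fun i _ => sq_nonneg _
  have h0 : 0 ≤ ∑ i ∈ s, f i * g i :=
    Finset.sum_nonneg fun i _ => mul_nonneg (hf0 i) (hg0 i)
  have hcs : ∑ i ∈ s, f i * g i ≤
      Real.sqrt (∑ i ∈ s, f i ^ 2) * Real.sqrt (∑ i ∈ s, g i ^ 2) := by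
    rw [← Real.sqrt_mul h1]
    calc ∑ i ∈ s, f i * g i = Real.sqrt ((∑ i ∈ s, f i * g i) ^ 2) := (Real.sqrt_sq h0).symm
    _ ≤ _ := Real.sqrt_le_sqrt hcs2
  have hexp : ∑ i ∈ s, (f i + g i) ^ 2
      = ∑ i ∈ s, f i ^ 2 + 2 * ∑ i ∈ s, f i * g i + ∑ i ∈ s, g i ^ 2 := by
    have heq : ∀ i, (f i + g i) ^ 2 = f i ^ 2 + 2 * (f i * g i) + g i ^ 2 := fun i => by ring
    simp_rw [heq, Finset.sum_add_distrib, ← Finset.mul_sum]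
  have hle : ∑ i ∈ s, (f i + g i) ^ 2 ≤
      (Real.sqrt (∑ i ∈ s, f i ^ 2) + Real.sqrt (∑ i ∈ s, g i ^ 2)) ^ 2 := by
    rw [hexp, add_sq, Real.sq_sqrt h1, Real.sq_sqrt h2]
    nlinarith [hcs]
  calc Real.sqrt (∑ i ∈ s, (f i + g i) ^ 2)
      ≤ Real.sqrt ((Real.sqrt (∑ i ∈ s, f i ^ 2) + Real.sqrt (∑ i ∈ s, g i ^ 2)) ^ 2) :=
        Real.sqrt_le_sqrt hle
    _ = _ := Real.sqrt_sq (by positivity)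

end Helpers


/-- Euclidean space `ℝ^d`. -/
abbrev Euc (d : ℕ) := EuclideanSpace ℝ (Fin d)

/-- The SVGD drift `R^h_μ(z) = −∫ (k(x,z)·h(x) + ∇₁k(x,z)) dμ(x)`. -/
def drift {d : ℕ} (k : Euc d → Euc d → ℝ) (gk : Euc d → Euc d → Euc d)
    (h : Euc d → Euc d) (μ : Measure (Euc d)) (z : Euc d) : Euc d :=
  -∫ x, (k x z • h x + gk x z) ∂μ

/-- Assumptions on the kernel `k` and its first-argument gradient `gk`:
differentiability, boundedness by `B` and `B_L`-Lipschitz continuity. -/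
def KernelAssumptions {d : ℕ} (B BL : ℝ) (k : Euc d → Euc d → ℝ)
    (gk : Euc d → Euc d → Euc d) : Prop :=
  (∀ x y, HasGradientAt (fun x' => k x' y) (gk x y) x) ∧
  (∀ x y, |k x y| ≤ B) ∧ (∀ x y, ‖gk x y‖ ≤ B) ∧
  (∀ x x' y y', |k x x' - k y y'| ≤ BL * (‖x - y‖ + ‖x' - y'‖)) ∧
  (∀ x x' y y', ‖gk x x' - gk y y'‖ ≤ BL * (‖x - y‖ + ‖x' - y'‖))

/-- A potential gradient: bounded by `CV` and `M`-Lipschitz. -/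
def PotGrad {d : ℕ} (CV M : ℝ) (h : Euc d → Euc d) : Prop :=
  (∀ x, ‖h x‖ ≤ CV) ∧ (∀ x y, ‖h x - h y‖ ≤ M * ‖x - y‖)

/-- The mean-field SVGD measures: `ρ₀` and
`ρ_{n+1} = (id − γ·R^h_{ρ_n})_♯ ρ_n`. -/
def mfSeq {d : ℕ} (γ : ℝ) (k : Euc d → Euc d → ℝ) (gk : Euc d → Euc d → Euc d)
    (h : Euc d → Euc d) (ρ₀ : Measure (Euc d)) : ℕ → Measure (Euc d)
  | 0 => ρ₀
  | n + 1 => (mfSeq γ k gk h ρ₀ n).map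
      (fun z => z - γ • drift k gk h (mfSeq γ k gk h ρ₀ n) z)

/-- Empirical measure of the first `N` points of `pts`. -/
def empMeas {d : ℕ} (N : ℕ) (pts : ℕ → Euc d) : Measure (Euc d) :=
  (N : ℝ≥0∞)⁻¹ • ∑ j ∈ Finset.range N, Measure.dirac (pts j)

/-- Mean of a measure. -/
def meanMeas {d : ℕ} (μ : Measure (Euc d)) : Euc d := ∫ x, x ∂μ

/-- Variance of a measure. -/
def varMeas {d : ℕ} (μ : Measure (Euc d)) : ℝ := ∫ x, ‖x - meanMeas μ‖ ^ 2 ∂μ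

/-- An interacting SVGD particle system with `N` particles, step size `γ`,
potential gradient `h` and i.i.d. initialization with law `ρ₀`. -/
def IsInteracting {d : ℕ} (γ : ℝ) (k : Euc d → Euc d → ℝ) (gk : Euc d → Euc d → Euc d)
    (h : Euc d → Euc d) (ρ₀ : Measure (Euc d)) (N : ℕ)
    {Ω : Type} [MeasurableSpace Ω] (P : Measure Ω) (X : ℕ → ℕ → Ω → Euc d) : Prop :=
  (∀ n i, Measurable (X n i)) ∧
  iIndepFun
    (fun i : Fin N => X 0 i) P ∧
  (∀ i < N, P.map (X 0 i) = ρ₀) ∧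
  (∀ n, ∀ i < N, ∀ ω, X (n + 1) i ω =
      X n i ω - γ • drift k gk h (empMeas N (fun j => X n j ω)) (X n i ω))


section SVGD

variable {d : ℕ} {B BL CV M : ℝ}
variable {k : Euc d → Euc d → ℝ} {gk : Euc d → Euc d → Euc d} {h : Euc d → Euc d}

/-- The integrand of the SVGD drift. -/
def Fk (k : Euc d → Euc d → ℝ) (gk : Euc d → Euc d → Euc d) (h : Euc d → Euc d)
    (x z : Euc d) : Euc d := k x z • h x + gk x z

lemma drift_eq (μ : Measure (Euc d)) (z : Euc d) :
    drift k gk h μ z = -∫ x, Fk k gk h x z ∂μ := rfl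

lemma Fk_bound (hB : 0 ≤ B) (hCV : 0 ≤ CV)
    (hk : KernelAssumptions B BL k gk) (hh : PotGrad CV M h) (x z : Euc d) :
    ‖Fk k gk h x z‖ ≤ B * (CV + 1) := by
  have h1 : ‖k x z • h x‖ ≤ B * CV := by
    rw [norm_smul, Real.norm_eq_abs]
    exact mul_le_mul (hk.2.1 x z) (hh.1 x) (norm_nonneg _) hB
  have h2 : ‖gk x z‖ ≤ B := hk.2.2.1 x z
  calc ‖Fk k gk h x z‖ ≤ ‖k x z • h x‖ + ‖gk x z‖ := norm_add_le _ _
    _ ≤ B * CV + B := add_le_add h1 h2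
    _ = B * (CV + 1) := by ring

lemma Fk_lip (hB : 0 ≤ B) (hBL : 0 ≤ BL) (hCV : 0 ≤ CV) (hM : 0 ≤ M)
    (hk : KernelAssumptions B BL k gk) (hh : PotGrad CV M h) (x x' z z' : Euc d) :
    ‖Fk k gk h x z - Fk k gk h x' z'‖ ≤
      (BL * (CV + 1) + B * M) * (‖x - x'‖ + ‖z - z'‖) := by
  have hdec : Fk k gk h x z - Fk k gk h x' z' =
      (k x z - k x' z') • h x + k x' z' • (h x - h x') + (gk x z - gk x' z') := by
    simp only [Fk, sub_smul, smul_sub]; abel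
  have h1 : ‖(k x z - k x' z') • h x‖ ≤ BL * (‖x - x'‖ + ‖z - z'‖) * CV := by
    rw [norm_smul, Real.norm_eq_abs]
    exact mul_le_mul (hk.2.2.2.1 x z x' z') (hh.1 x) (norm_nonneg _)
      (by positivity)
  have h2 : ‖k x z' • (h x - h x')‖ ≤ B * (M * ‖x - x'‖) := by
    rw [norm_smul, Real.norm_eq_abs]
    exact mul_le_mul (hk.2.1 x z') (hh.2 x x') (norm_nonneg _) hB
  have h2' : ‖k x' z' • (h x - h x')‖ ≤ B * (M * ‖x - x'‖) := by
    rw [norm_smul, Real.norm_eq_abs]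
    exact mul_le_mul (hk.2.1 x' z') (hh.2 x x') (norm_nonneg _) hB
  have h3 : ‖gk x z - gk x' z'‖ ≤ BL * (‖x - x'‖ + ‖z - z'‖) := hk.2.2.2.2 x z x' z'
  have hBM : 0 ≤ B * M * ‖z - z'‖ := by positivity
  calc ‖Fk k gk h x z - Fk k gk h x' z'‖
      ≤ ‖(k x z - k x' z') • h x‖ + ‖k x' z' • (h x - h x')‖ + ‖gk x z - gk x' z'‖ := by
        rw [hdec]; exact (norm_add_le _ _).trans (add_le_add_left (norm_add_le _ _) _)
    _ ≤ BL * (‖x - x'‖ + ‖z - z'‖) * CV + B * (M * ‖x - x'‖)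
        + BL * (‖x - x'‖ + ‖z - z'‖) := add_le_add (add_le_add h1 h2') h3
    _ ≤ (BL * (CV + 1) + B * M) * (‖x - x'‖ + ‖z - z'‖) := by nlinarith [norm_nonneg (z - z')]

lemma Fk_cont (hB : 0 ≤ B) (hBL : 0 ≤ BL) (hCV : 0 ≤ CV) (hM : 0 ≤ M)
    (hk : KernelAssumptions B BL k gk) (hh : PotGrad CV M h) :
    Continuous fun p : Euc d × Euc d => Fk k gk h p.1 p.2 := by
  set L := BL * (CV + 1) + B * M with hL
  have hL0 : 0 ≤ L := by positivity
  have : LipschitzWith (2 * L).toNNReal fun p : Euc d × Euc d => Fk k gk h p.1 p.2 := by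
    refine LipschitzWith.of_dist_le_mul fun p q => ?_
    have h1 : dist p.1 q.1 ≤ dist p q := le_max_left _ _
    have h2 : dist p.2 q.2 ≤ dist p q := le_max_right _ _
    have := Fk_lip hB hBL hCV hM hk hh p.1 q.1 p.2 q.2
    rw [dist_eq_norm, dist_eq_norm] at h1 h2 ⊢
    calc ‖Fk k gk h p.1 p.2 - Fk k gk h q.1 q.2‖
        ≤ L * (‖p.1 - q.1‖ + ‖p.2 - q.2‖) := this
      _ ≤ L * (dist p q + dist p q) := by
          rw [dist_eq_norm]
          exact mul_le_mul_of_nonneg_left (add_le_add h1 h2) hL0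
      _ = 2 * L * dist p q := by ring
      _ = ((2 * L).toNNReal : ℝ) * dist p q := by
          rw [Real.coe_toNNReal _ (by positivity)]
  exact this.continuous

lemma Fk_cont_fst (hB : 0 ≤ B) (hBL : 0 ≤ BL) (hCV : 0 ≤ CV) (hM : 0 ≤ M)
    (hk : KernelAssumptions B BL k gk) (hh : PotGrad CV M h) (z : Euc d) :
    Continuous fun x => Fk k gk h x z :=
  (Fk_cont hB hBL hCV hM hk hh).comp (continuous_id.prodMk continuous_const)

lemma Fk_integrable (hB : 0 ≤ B) (hBL : 0 ≤ BL) (hCV : 0 ≤ CV) (hM : 0 ≤ M)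
    (hk : KernelAssumptions B BL k gk) (hh : PotGrad CV M h)
    (μ : Measure (Euc d)) [IsFiniteMeasure μ] (z : Euc d) :
    Integrable (fun x => Fk k gk h x z) μ :=
  ⟨(Fk_cont_fst hB hBL hCV hM hk hh z).aestronglyMeasurable,
    HasFiniteIntegral.of_bounded (C := B * (CV + 1))
      (ae_of_all μ fun x => Fk_bound hB hCV hk hh x z)⟩

lemma drift_bound (hB : 0 ≤ B) (hCV : 0 ≤ CV)
    (hk : KernelAssumptions B BL k gk) (hh : PotGrad CV M h)
    (μ : Measure (Euc d)) [IsProbabilityMeasure μ] (z : Euc d) :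
    ‖drift k gk h μ z‖ ≤ B * (CV + 1) := by
  rw [drift_eq, norm_neg]
  calc ‖∫ x, Fk k gk h x z ∂μ‖ ≤ B * (CV + 1) * (μ Set.univ).toReal :=
        norm_integral_le_of_norm_le_const (ae_of_all μ fun x => Fk_bound hB hCV hk hh x z)
    _ = B * (CV + 1) := by simp

lemma intFk_lip (hB : 0 ≤ B) (hBL : 0 ≤ BL) (hCV : 0 ≤ CV) (hM : 0 ≤ M)
    (hk : KernelAssumptions B BL k gk) (hh : PotGrad CV M h)
    (μ : Measure (Euc d)) [IsProbabilityMeasure μ]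
    (hint : ∀ w : Euc d, Integrable (fun x => Fk k gk h x w) μ) (z z' : Euc d) :
    ‖(∫ x, Fk k gk h x z ∂μ) - ∫ x, Fk k gk h x z' ∂μ‖ ≤
      (BL * (CV + 1) + B * M) * ‖z - z'‖ := by
  rw [← integral_sub (hint z) (hint z')]
  calc ‖∫ x, (Fk k gk h x z - Fk k gk h x z') ∂μ‖
      ≤ (BL * (CV + 1) + B * M) * ‖z - z'‖ * (μ Set.univ).toReal := by
        refine norm_integral_le_of_norm_le_const (ae_of_all μ fun x => ?_)
        have := Fk_lip hB hBL hCV hM hk hh x x z z'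
        simpa using this
    _ = (BL * (CV + 1) + B * M) * ‖z - z'‖ := by simp

lemma drift_lip (hB : 0 ≤ B) (hBL : 0 ≤ BL) (hCV : 0 ≤ CV) (hM : 0 ≤ M)
    (hk : KernelAssumptions B BL k gk) (hh : PotGrad CV M h)
    (μ : Measure (Euc d)) [IsProbabilityMeasure μ]
    (hint : ∀ w : Euc d, Integrable (fun x => Fk k gk h x w) μ) (z z' : Euc d) :
    ‖drift k gk h μ z - drift k gk h μ z'‖ ≤ (BL * (CV + 1) + B * M) * ‖z - z'‖ := by
  have e : drift k gk h μ z - drift k gk h μ z'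
      = (∫ x, Fk k gk h x z' ∂μ) - ∫ x, Fk k gk h x z ∂μ := by
    rw [drift_eq, drift_eq]; abel
  rw [e]
  have h2 := intFk_lip hB hBL hCV hM hk hh μ hint z' z
  rwa [norm_sub_rev z' z] at h2

lemma drift_cont (hB : 0 ≤ B) (hBL : 0 ≤ BL) (hCV : 0 ≤ CV) (hM : 0 ≤ M)
    (hk : KernelAssumptions B BL k gk) (hh : PotGrad CV M h)
    (μ : Measure (Euc d)) [IsProbabilityMeasure μ] :
    Continuous fun z => drift k gk h μ z := by
  have hint : ∀ w : Euc d, Integrable (fun x => Fk k gk h x w) μ :=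
    Fk_integrable hB hBL hCV hM hk hh μ
  set L := BL * (CV + 1) + B * M with hL
  have hL0 : 0 ≤ L := by positivity
  have : LipschitzWith L.toNNReal fun z => drift k gk h μ z := by
    refine LipschitzWith.of_dist_le_mul fun z z' => ?_
    rw [dist_eq_norm, dist_eq_norm, Real.coe_toNNReal _ hL0]
    exact drift_lip hB hBL hCV hM hk hh μ hint z z'
  exact this.continuous

lemma drift_emp (hB : 0 ≤ B) (hBL : 0 ≤ BL) (hCV : 0 ≤ CV) (hM : 0 ≤ M)
    (hk : KernelAssumptions B BL k gk) (hh : PotGrad CV M h)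
    (N : ℕ) (pts : ℕ → Euc d) (z : Euc d) :
    drift k gk h (empMeas N pts) z
      = -((N : ℝ)⁻¹ • ∑ j ∈ Finset.range N, Fk k gk h (pts j) z) := by
  rw [drift_eq, neg_inj]
  unfold empMeas
  rw [integral_smul_measure]
  rw [integral_finset_sum_measure (fun j _ => Fk_integrable hB hBL hCV hM hk hh _ z)]
  congr 1
  · simp
  · exact Finset.sum_congr rfl fun j _ => integral_dirac _ (pts j)

lemma drift_emp_bound (hB : 0 ≤ B) (hBL : 0 ≤ BL) (hCV : 0 ≤ CV) (hM : 0 ≤ M)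
    (hk : KernelAssumptions B BL k gk) (hh : PotGrad CV M h)
    (N : ℕ) (hN : 0 < N) (pts : ℕ → Euc d) (z : Euc d) :
    ‖drift k gk h (empMeas N pts) z‖ ≤ B * (CV + 1) := by
  rw [drift_emp hB hBL hCV hM hk hh, norm_neg, norm_smul]
  have h1 : ‖∑ j ∈ Finset.range N, Fk k gk h (pts j) z‖ ≤ (N : ℝ) * (B * (CV + 1)) := by
    calc ‖∑ j ∈ Finset.range N, Fk k gk h (pts j) z‖
        ≤ ∑ j ∈ Finset.range N, ‖Fk k gk h (pts j) z‖ := norm_sum_le _ _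
      _ ≤ ∑ _j ∈ Finset.range N, (B * (CV + 1)) :=
          Finset.sum_le_sum fun j _ => Fk_bound hB hCV hk hh _ _
      _ = (N : ℝ) * (B * (CV + 1)) := by simp [mul_comm]
  have hN' : (0 : ℝ) < (N : ℝ) := by exact_mod_cast hN
  calc ‖(N : ℝ)⁻¹‖ * ‖∑ j ∈ Finset.range N, Fk k gk h (pts j) z‖
      ≤ (N : ℝ)⁻¹ * ((N : ℝ) * (B * (CV + 1))) := by
        rw [Real.norm_eq_abs, abs_of_nonneg (by positivity)]
        exact mul_le_mul_of_nonneg_left h1 (by positivity)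
    _ = B * (CV + 1) := by field_simp

end SVGD


section SVGD2

open scoped RealInnerProductSpace

variable {d : ℕ} {B BL CV M : ℝ}
variable {k : Euc d → Euc d → ℝ} {gk : Euc d → Euc d → Euc d} {h : Euc d → Euc d}

lemma memLp_norm_sub (μ : Measure (Euc d)) [IsFiniteMeasure μ] (hμ2 : MemLp id 2 μ) (c : Euc d) :
    MemLp (fun x : Euc d => ‖x - c‖) 2 μ := (hμ2.sub (memLp_const c)).norm

lemma varMeas_nonneg (μ : Measure (Euc d)) : 0 ≤ varMeas μ :=
  integral_nonneg fun x => sq_nonneg _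

lemma var_le_moment (μ : Measure (Euc d)) [IsProbabilityMeasure μ]
    (hμ2 : MemLp id 2 μ) (c : Euc d) :
    varMeas μ ≤ ∫ x, ‖x - c‖ ^ 2 ∂μ := by
  set m := meanMeas μ with hm
  have hid : Integrable (fun x : Euc d => x) μ := hμ2.integrable one_le_two
  have hsub : MemLp (fun x : Euc d => x - m) 2 μ := hμ2.sub (memLp_const m)
  have h1 : Integrable (fun x => ‖x - m‖ ^ 2) μ := by
    have := hsub.norm.integrable_sq
    simpa using this
  have h2 : Integrable (fun x : Euc d => (⟪x - m, m - c⟫ : ℝ)) μ :=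
    (hsub.integrable one_le_two).inner_const (m - c)
  have hzero : ∫ x, (x - m) ∂μ = 0 := by
    rw [integral_sub hid (integrable_const m), integral_const]
    simp only [measure_univ, probReal_univ, ENNReal.toReal_one, one_smul, hm, meanMeas, sub_self]
  have hinner : ∫ x, (⟪x - m, m - c⟫ : ℝ) ∂μ = 0 := by
    have hcomm : ∀ x : Euc d, (⟪x - m, m - c⟫ : ℝ) = (⟪m - c, x - m⟫ : ℝ) :=
      fun x => real_inner_comm _ _
    simp_rw [hcomm]
    rw [integral_inner (hsub.integrable one_le_two), hzero, inner_zero_right]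
  have hptw : ∀ x : Euc d, ‖x - c‖ ^ 2 = ‖x - m‖ ^ 2 + 2 * (⟪x - m, m - c⟫ : ℝ) + ‖m - c‖ ^ 2 :=
    fun x => by rw [show x - c = (x - m) + (m - c) by abel, norm_add_sq_real]
  have hexp : ∫ x, ‖x - c‖ ^ 2 ∂μ = varMeas μ + 2 * 0 + ‖m - c‖ ^ 2 := by
    calc ∫ x, ‖x - c‖ ^ 2 ∂μ
        = ∫ x, (‖x - m‖ ^ 2 + 2 * (⟪x - m, m - c⟫ : ℝ) + ‖m - c‖ ^ 2) ∂μ := integral_congr_ae (ae_of_all μ fun x => hptw x)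
      _ = ∫ x, (‖x - m‖ ^ 2 + 2 * (⟪x - m, m - c⟫ : ℝ)) ∂μ + ∫ _x, ‖m - c‖ ^ 2 ∂μ :=
          integral_add (h1.add (h2.const_mul 2)) (integrable_const _)
      _ = (∫ x, ‖x - m‖ ^ 2 ∂μ + ∫ x, 2 * (⟪x - m, m - c⟫ : ℝ) ∂μ) + ‖m - c‖ ^ 2 := by
          rw [integral_add h1 (h2.const_mul 2), integral_const]
          simp only [measure_univ, probReal_univ, ENNReal.toReal_one, one_smul]
      _ = varMeas μ + 2 * 0 + ‖m - c‖ ^ 2 := by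
          rw [integral_const_mul, hinner, varMeas, ← hm]
  rw [hexp]
  nlinarith [sq_nonneg ‖m - c‖]

lemma abs_moment_le_sqrt_var (μ : Measure (Euc d)) [IsProbabilityMeasure μ]
    (hμ2 : MemLp id 2 μ) :
    ∫ x, ‖x - meanMeas μ‖ ∂μ ≤ Real.sqrt (varMeas μ) := by
  have hf : MemLp (fun x : Euc d => ‖x - meanMeas μ‖) 2 μ := memLp_norm_sub μ hμ2 _
  have hone : MemLp (fun _ : Euc d => (1 : ℝ)) 2 μ := memLp_const 1
  have := integral_mul_le_sqrt_mul_sqrt (fun x : Euc d => ‖x - meanMeas μ‖)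
    (fun _ => (1 : ℝ)) (fun x => norm_nonneg _) (fun _ => zero_le_one) hf hone
  simpa [varMeas] using this

/-- The centered drift integrand. -/
def Gf (k : Euc d → Euc d → ℝ) (gk : Euc d → Euc d → Euc d) (h : Euc d → Euc d)
    (ρ : Measure (Euc d)) (x z : Euc d) : Euc d :=
  Fk k gk h x z - ∫ x', Fk k gk h x' z ∂ρ

lemma Gf_mean_zero (hB : 0 ≤ B) (hBL : 0 ≤ BL) (hCV : 0 ≤ CV) (hM : 0 ≤ M)
    (hk : KernelAssumptions B BL k gk) (hh : PotGrad CV M h)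
    (ρ : Measure (Euc d)) [IsProbabilityMeasure ρ] (z : Euc d) :
    ∫ x, Gf k gk h ρ x z ∂ρ = 0 := by
  unfold Gf
  rw [integral_sub (Fk_integrable hB hBL hCV hM hk hh ρ z) (integrable_const _),
    integral_const]
  simp

lemma Gf_bound (hB : 0 ≤ B) (hCV : 0 ≤ CV)
    (hk : KernelAssumptions B BL k gk) (hh : PotGrad CV M h)
    (ρ : Measure (Euc d)) [IsProbabilityMeasure ρ] (x z : Euc d) :
    ‖Gf k gk h ρ x z‖ ≤ 2 * (B * (CV + 1)) := by
  have h1 : ‖∫ x', Fk k gk h x' z ∂ρ‖ ≤ B * (CV + 1) := by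
    calc ‖∫ x', Fk k gk h x' z ∂ρ‖ ≤ B * (CV + 1) * (ρ Set.univ).toReal :=
          norm_integral_le_of_norm_le_const (ae_of_all ρ fun x' => Fk_bound hB hCV hk hh x' z)
      _ = B * (CV + 1) := by simp
  calc ‖Gf k gk h ρ x z‖ ≤ ‖Fk k gk h x z‖ + ‖∫ x', Fk k gk h x' z ∂ρ‖ := norm_sub_le _ _
    _ ≤ B * (CV + 1) + B * (CV + 1) := add_le_add (Fk_bound hB hCV hk hh x z) h1
    _ = 2 * (B * (CV + 1)) := by ring

lemma Gf_cont (hB : 0 ≤ B) (hBL : 0 ≤ BL) (hCV : 0 ≤ CV) (hM : 0 ≤ M)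
    (hk : KernelAssumptions B BL k gk) (hh : PotGrad CV M h)
    (ρ : Measure (Euc d)) [IsProbabilityMeasure ρ] :
    Continuous fun p : Euc d × Euc d => Gf k gk h ρ p.1 p.2 := by
  have hint : ∀ w : Euc d, Integrable (fun x => Fk k gk h x w) ρ :=
    Fk_integrable hB hBL hCV hM hk hh ρ
  set L := BL * (CV + 1) + B * M with hL
  have hL0 : 0 ≤ L := by positivity
  have hcont2 : Continuous fun z : Euc d => ∫ x', Fk k gk h x' z ∂ρ := by
    have : LipschitzWith L.toNNReal fun z : Euc d => ∫ x', Fk k gk h x' z ∂ρ := by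
      refine LipschitzWith.of_dist_le_mul fun z z' => ?_
      rw [dist_eq_norm, dist_eq_norm, Real.coe_toNNReal _ hL0]
      exact intFk_lip hB hBL hCV hM hk hh ρ hint z z'
    exact this.continuous
  exact (Fk_cont hB hBL hCV hM hk hh).sub (hcont2.comp continuous_snd)

lemma Gf_norm_le (hB : 0 ≤ B) (hBL : 0 ≤ BL) (hCV : 0 ≤ CV) (hM : 0 ≤ M)
    (hk : KernelAssumptions B BL k gk) (hh : PotGrad CV M h)
    (ρ : Measure (Euc d)) [IsProbabilityMeasure ρ] (hρ2 : MemLp id 2 ρ) (x z : Euc d) :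
    ‖Gf k gk h ρ x z‖ ≤ (BL * (CV + 1) + B * M) *
      (‖x - meanMeas ρ‖ + Real.sqrt (varMeas ρ)) := by
  set L := BL * (CV + 1) + B * M with hL
  have hL0 : 0 ≤ L := by positivity
  set m := meanMeas ρ with hm
  have hint : Integrable (fun x' => Fk k gk h x' z) ρ := Fk_integrable hB hBL hCV hM hk hh ρ z
  have hmom : Integrable (fun x' : Euc d => ‖x' - m‖) ρ :=
    (memLp_norm_sub ρ hρ2 m).integrable one_le_two
  have hrw : Gf k gk h ρ x z = ∫ x', (Fk k gk h x z - Fk k gk h x' z) ∂ρ := by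
    rw [integral_sub (integrable_const _) hint, integral_const]
    simp [Gf]
  have hptw : ∀ x' : Euc d, ‖Fk k gk h x z - Fk k gk h x' z‖ ≤ L * (‖x - m‖ + ‖x' - m‖) := by
    intro x'
    have h1 := Fk_lip hB hBL hCV hM hk hh x x' z z
    have h2 : ‖x - x'‖ ≤ ‖x - m‖ + ‖x' - m‖ := by
      calc ‖x - x'‖ = ‖(x - m) - (x' - m)‖ := by abel_nf
        _ ≤ ‖x - m‖ + ‖x' - m‖ := norm_sub_le _ _
    calc ‖Fk k gk h x z - Fk k gk h x' z‖ ≤ L * (‖x - x'‖ + ‖z - z‖) := h1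
      _ = L * ‖x - x'‖ := by simp
      _ ≤ L * (‖x - m‖ + ‖x' - m‖) := mul_le_mul_of_nonneg_left h2 hL0
  have hint2 : Integrable (fun x' : Euc d => L * (‖x - m‖ + ‖x' - m‖)) ρ :=
    ((integrable_const ‖x - m‖).add hmom).const_mul L
  calc ‖Gf k gk h ρ x z‖ = ‖∫ x', (Fk k gk h x z - Fk k gk h x' z) ∂ρ‖ := by rw [hrw]
    _ ≤ ∫ x', ‖Fk k gk h x z - Fk k gk h x' z‖ ∂ρ := norm_integral_le_integral_norm _
    _ ≤ ∫ x', L * (‖x - m‖ + ‖x' - m‖) ∂ρ :=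
        integral_mono_of_nonneg (ae_of_all ρ fun x' => norm_nonneg _) hint2
          (ae_of_all ρ hptw)
    _ = L * (‖x - m‖ + ∫ x', ‖x' - m‖ ∂ρ) := by
        rw [integral_const_mul, integral_add (integrable_const _) hmom, integral_const]
        simp
    _ ≤ L * (‖x - m‖ + Real.sqrt (varMeas ρ)) := by
        refine mul_le_mul_of_nonneg_left (add_le_add_right ?_ _) hL0
        exact abs_moment_le_sqrt_var ρ hρ2

lemma Gf_sq_integral_le (hB : 0 ≤ B) (hBL : 0 ≤ BL) (hCV : 0 ≤ CV) (hM : 0 ≤ M)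
    (hk : KernelAssumptions B BL k gk) (hh : PotGrad CV M h)
    (ρ : Measure (Euc d)) [IsProbabilityMeasure ρ] (hρ2 : MemLp id 2 ρ) (z : Euc d) :
    ∫ x, ‖Gf k gk h ρ x z‖ ^ 2 ∂ρ ≤ 4 * (BL * (CV + 1) + B * M) ^ 2 * varMeas ρ := by
  set L := BL * (CV + 1) + B * M with hL
  have hL0 : 0 ≤ L := by positivity
  set m := meanMeas ρ with hm
  have h1 : Integrable (fun x => ‖x - m‖ ^ 2) ρ := by
    have := (memLp_norm_sub ρ hρ2 m).integrable_sq
    simpa using this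
  have hptw : ∀ x : Euc d, ‖Gf k gk h ρ x z‖ ^ 2 ≤
      2 * L ^ 2 * (‖x - m‖ ^ 2 + varMeas ρ) := by
    intro x
    have hs : Real.sqrt (varMeas ρ) ^ 2 = varMeas ρ := Real.sq_sqrt (varMeas_nonneg ρ)
    have hb : ‖Gf k gk h ρ x z‖ ≤ L * (‖x - m‖ + Real.sqrt (varMeas ρ)) :=
      Gf_norm_le hB hBL hCV hM hk hh ρ hρ2 x z
    have h2 : ‖Gf k gk h ρ x z‖ ^ 2 ≤ (L * (‖x - m‖ + Real.sqrt (varMeas ρ))) ^ 2 :=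
      pow_le_pow_left₀ (norm_nonneg _) hb 2
    have h3 : 0 ≤ L ^ 2 * (‖x - m‖ - Real.sqrt (varMeas ρ)) ^ 2 :=
      mul_nonneg (sq_nonneg _) (sq_nonneg _)
    nlinarith [h2, h3, hs]
  calc ∫ x, ‖Gf k gk h ρ x z‖ ^ 2 ∂ρ
      ≤ ∫ x, 2 * L ^ 2 * (‖x - m‖ ^ 2 + varMeas ρ) ∂ρ :=
        integral_mono_of_nonneg (ae_of_all ρ fun x => sq_nonneg _)
          ((h1.add (integrable_const _)).const_mul _) (ae_of_all ρ hptw)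
    _ = 2 * L ^ 2 * (varMeas ρ + varMeas ρ) := by
        rw [integral_const_mul, integral_add h1 (integrable_const _), integral_const]
        simp [varMeas, ← hm]
    _ ≤ 4 * L ^ 2 * varMeas ρ := by nlinarith [varMeas_nonneg ρ, sq_nonneg L]

lemma Gf_diag_sq_integral_le (hB : 0 ≤ B) (hBL : 0 ≤ BL) (hCV : 0 ≤ CV) (hM : 0 ≤ M)
    (hk : KernelAssumptions B BL k gk) (hh : PotGrad CV M h)
    (ρ : Measure (Euc d)) [IsProbabilityMeasure ρ] (hρ2 : MemLp id 2 ρ) :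
    ∫ z, ‖Gf k gk h ρ z z‖ ^ 2 ∂ρ ≤ 4 * (BL * (CV + 1) + B * M) ^ 2 * varMeas ρ := by
  set L := BL * (CV + 1) + B * M with hL
  have hL0 : 0 ≤ L := by positivity
  set m := meanMeas ρ with hm
  have h1 : Integrable (fun x => ‖x - m‖ ^ 2) ρ := by
    have := (memLp_norm_sub ρ hρ2 m).integrable_sq
    simpa using this
  have hptw : ∀ z : Euc d, ‖Gf k gk h ρ z z‖ ^ 2 ≤
      2 * L ^ 2 * (‖z - m‖ ^ 2 + varMeas ρ) := by
    intro z
    have hs : Real.sqrt (varMeas ρ) ^ 2 = varMeas ρ := Real.sq_sqrt (varMeas_nonneg ρ)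
    have hb : ‖Gf k gk h ρ z z‖ ≤ L * (‖z - m‖ + Real.sqrt (varMeas ρ)) :=
      Gf_norm_le hB hBL hCV hM hk hh ρ hρ2 z z
    have h2 : ‖Gf k gk h ρ z z‖ ^ 2 ≤ (L * (‖z - m‖ + Real.sqrt (varMeas ρ))) ^ 2 :=
      pow_le_pow_left₀ (norm_nonneg _) hb 2
    have h3 : 0 ≤ L ^ 2 * (‖z - m‖ - Real.sqrt (varMeas ρ)) ^ 2 :=
      mul_nonneg (sq_nonneg _) (sq_nonneg _)
    nlinarith [h2, h3, hs]
  calc ∫ z, ‖Gf k gk h ρ z z‖ ^ 2 ∂ρ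
      ≤ ∫ z, 2 * L ^ 2 * (‖z - m‖ ^ 2 + varMeas ρ) ∂ρ :=
        integral_mono_of_nonneg (ae_of_all ρ fun z => sq_nonneg _)
          ((h1.add (integrable_const _)).const_mul _) (ae_of_all ρ hptw)
    _ = 2 * L ^ 2 * (varMeas ρ + varMeas ρ) := by
        rw [integral_const_mul, integral_add h1 (integrable_const _), integral_const]
        simp [varMeas, ← hm]
    _ ≤ 4 * L ^ 2 * varMeas ρ := by nlinarith [varMeas_nonneg ρ, sq_nonneg L]

lemma var_map_le (μ : Measure (Euc d)) [IsProbabilityMeasure μ] (hμ2 : MemLp id 2 μ)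
    (T : Euc d → Euc d) (hT : Continuous T) (c : ℝ) (hc : 0 ≤ c)
    (hlip : ∀ x y, ‖T x - T y‖ ≤ c * ‖x - y‖) :
    varMeas (μ.map T) ≤ c ^ 2 * varMeas μ := by
  haveI : IsProbabilityMeasure (μ.map T) :=
    Measure.isProbabilityMeasure_map hT.measurable.aemeasurable
  have hT2 : MemLp T 2 μ := by
    have hg : MemLp (fun x : Euc d => ‖T 0‖ + c * ‖x‖) 2 μ :=
      (memLp_const ‖T 0‖).add (hμ2.norm.const_mul c)
    refine MemLp.of_le hg hT.aestronglyMeasurable (ae_of_all μ fun x => ?_)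
    have h1 : ‖T x‖ ≤ ‖T 0‖ + c * ‖x‖ := by
      calc ‖T x‖ ≤ ‖T x - T 0‖ + ‖T 0‖ := by
            simpa using norm_add_le (T x - T 0) (T 0)
        _ ≤ c * ‖x - 0‖ + ‖T 0‖ := add_le_add_left (hlip x 0) _
        _ = ‖T 0‖ + c * ‖x‖ := by rw [sub_zero]; ring
    calc ‖T x‖ ≤ ‖T 0‖ + c * ‖x‖ := h1
      _ ≤ ‖‖T 0‖ + c * ‖x‖‖ := le_abs_self _
  have hmap2 : MemLp id 2 (μ.map T) :=
    (memLp_map_measure_iff aestronglyMeasurable_id hT.measurable.aemeasurable).mpr hT2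
  set m := meanMeas μ with hm
  have step1 : varMeas (μ.map T) ≤ ∫ y, ‖y - T m‖ ^ 2 ∂(μ.map T) :=
    var_le_moment (μ.map T) hmap2 (T m)
  have step2 : ∫ y, ‖y - T m‖ ^ 2 ∂(μ.map T) = ∫ x, ‖T x - T m‖ ^ 2 ∂μ :=
    integral_map hT.measurable.aemeasurable
      (Continuous.aestronglyMeasurable (by continuity))
  have h1 : Integrable (fun x => ‖x - m‖ ^ 2) μ := by
    have := (memLp_norm_sub μ hμ2 m).integrable_sq
    simpa using this
  have step3 : ∫ x, ‖T x - T m‖ ^ 2 ∂μ ≤ ∫ x, c ^ 2 * ‖x - m‖ ^ 2 ∂μ := by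
    refine integral_mono_of_nonneg (ae_of_all μ fun x => sq_nonneg _)
      (h1.const_mul _) (ae_of_all μ fun x => ?_)
    have := pow_le_pow_left₀ (norm_nonneg (T x - T m)) (hlip x m) 2
    calc ‖T x - T m‖ ^ 2 ≤ (c * ‖x - m‖) ^ 2 := this
      _ = c ^ 2 * ‖x - m‖ ^ 2 := by ring
  calc varMeas (μ.map T) ≤ ∫ x, ‖T x - T m‖ ^ 2 ∂μ := step1.trans_eq step2
    _ ≤ ∫ x, c ^ 2 * ‖x - m‖ ^ 2 ∂μ := step3
    _ = c ^ 2 * varMeas μ := by rw [integral_const_mul]; rfl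

end SVGD2


section MF

variable {d : ℕ} {B BL CV M : ℝ}
variable {k : Euc d → Euc d → ℝ} {gk : Euc d → Euc d → Euc d} {h : Euc d → Euc d}

lemma mfSeq_succ (γ : ℝ) (ρ₀ : Measure (Euc d)) (n : ℕ) :
    mfSeq γ k gk h ρ₀ (n + 1) = (mfSeq γ k gk h ρ₀ n).map
      (fun z => z - γ • drift k gk h (mfSeq γ k gk h ρ₀ n) z) := rfl

lemma mfMap_cont (hB : 0 ≤ B) (hBL : 0 ≤ BL) (hCV : 0 ≤ CV) (hM : 0 ≤ M)
    (hk : KernelAssumptions B BL k gk) (hh : PotGrad CV M h)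
    (μ : Measure (Euc d)) [IsProbabilityMeasure μ] (γ : ℝ) :
    Continuous (fun z : Euc d => z - γ • drift k gk h μ z) :=
  continuous_id.sub ((drift_cont hB hBL hCV hM hk hh μ).const_smul γ)

lemma mf_facts (hB : 0 ≤ B) (hBL : 0 ≤ BL) (hCV : 0 ≤ CV) (hM : 0 ≤ M)
    (hk : KernelAssumptions B BL k gk) (hh : PotGrad CV M h) (γ : ℝ)
    (ρ₀ : Measure (Euc d)) [IsProbabilityMeasure ρ₀] (hρ₀ : MemLp id 2 ρ₀) :
    ∀ n, IsProbabilityMeasure (mfSeq γ k gk h ρ₀ n) ∧ MemLp id 2 (mfSeq γ k gk h ρ₀ n) := by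
  intro n
  induction n with
  | zero => exact ⟨‹IsProbabilityMeasure ρ₀›, hρ₀⟩
  | succ n ih =>
    obtain ⟨hprob, hl2⟩ := ih
    haveI := hprob
    have hcont : Continuous (fun z : Euc d => z - γ • drift k gk h (mfSeq γ k gk h ρ₀ n) z) :=
      mfMap_cont hB hBL hCV hM hk hh _ γ
    refine ⟨?_, ?_⟩
    · rw [mfSeq_succ]
      exact Measure.isProbabilityMeasure_map hcont.measurable.aemeasurable
    · rw [mfSeq_succ]
      refine (memLp_map_measure_iff aestronglyMeasurable_id
        hcont.measurable.aemeasurable).mpr ?_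
      have hg : MemLp (fun z : Euc d => ‖z‖ + |γ| * (B * (CV + 1))) 2
          (mfSeq γ k gk h ρ₀ n) := by
        have : MemLp (fun z : Euc d => ‖z‖) 2 (mfSeq γ k gk h ρ₀ n) := hl2.norm
        exact this.add (memLp_const _)
      refine MemLp.of_le hg hcont.aestronglyMeasurable (ae_of_all _ fun z => ?_)
      have h1 : ‖z - γ • drift k gk h (mfSeq γ k gk h ρ₀ n) z‖
          ≤ ‖z‖ + |γ| * (B * (CV + 1)) := by
        calc ‖z - γ • drift k gk h (mfSeq γ k gk h ρ₀ n) z‖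
            ≤ ‖z‖ + ‖γ • drift k gk h (mfSeq γ k gk h ρ₀ n) z‖ := norm_sub_le _ _
          _ ≤ ‖z‖ + |γ| * (B * (CV + 1)) := by
              rw [norm_smul, Real.norm_eq_abs]
              exact add_le_add_right (mul_le_mul_of_nonneg_left
                (drift_bound hB hCV hk hh _ z) (abs_nonneg γ)) _
      calc ‖z - γ • drift k gk h (mfSeq γ k gk h ρ₀ n) z‖
          ≤ ‖z‖ + |γ| * (B * (CV + 1)) := h1
        _ ≤ ‖‖z‖ + |γ| * (B * (CV + 1))‖ := le_abs_self _

lemma mf_var_le (hB : 0 ≤ B) (hBL : 0 ≤ BL) (hCV : 0 ≤ CV) (hM : 0 ≤ M)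
    (hk : KernelAssumptions B BL k gk) (hh : PotGrad CV M h) {γ : ℝ} (hγ : 0 ≤ γ)
    (ρ₀ : Measure (Euc d)) [IsProbabilityMeasure ρ₀] (hρ₀ : MemLp id 2 ρ₀) :
    ∀ n, varMeas (mfSeq γ k gk h ρ₀ n)
      ≤ ((1 + γ * (BL * (CV + 1) + B * M)) ^ n) ^ 2 * varMeas ρ₀ := by
  set L := BL * (CV + 1) + B * M with hLdef
  have hL0 : 0 ≤ L := by positivity
  intro n
  induction n with
  | zero => simp [mfSeq]
  | succ n ih =>
    obtain ⟨hprob, hl2⟩ := mf_facts hB hBL hCV hM hk hh γ ρ₀ hρ₀ n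
    haveI := hprob
    have hint : ∀ w : Euc d, Integrable (fun x => Fk k gk h x w) (mfSeq γ k gk h ρ₀ n) :=
      Fk_integrable hB hBL hCV hM hk hh _
    have hlip : ∀ z z' : Euc d,
        ‖(z - γ • drift k gk h (mfSeq γ k gk h ρ₀ n) z) -
          (z' - γ • drift k gk h (mfSeq γ k gk h ρ₀ n) z')‖ ≤ (1 + γ * L) * ‖z - z'‖ := by
      intro z z'
      have hdec : (z - γ • drift k gk h (mfSeq γ k gk h ρ₀ n) z) -
          (z' - γ • drift k gk h (mfSeq γ k gk h ρ₀ n) z')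
          = (z - z') - γ • (drift k gk h (mfSeq γ k gk h ρ₀ n) z
              - drift k gk h (mfSeq γ k gk h ρ₀ n) z') := by
        rw [smul_sub]; abel
      rw [hdec]
      calc ‖(z - z') - γ • (drift k gk h (mfSeq γ k gk h ρ₀ n) z
              - drift k gk h (mfSeq γ k gk h ρ₀ n) z')‖
          ≤ ‖z - z'‖ + ‖γ • (drift k gk h (mfSeq γ k gk h ρ₀ n) z
              - drift k gk h (mfSeq γ k gk h ρ₀ n) z')‖ := norm_sub_le _ _
        _ ≤ ‖z - z'‖ + γ * (L * ‖z - z'‖) := by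
            rw [norm_smul, Real.norm_eq_abs, abs_of_nonneg hγ]
            exact add_le_add_right (mul_le_mul_of_nonneg_left
              (drift_lip hB hBL hCV hM hk hh _ hint z z') hγ) _
        _ = (1 + γ * L) * ‖z - z'‖ := by ring
    have hstep := var_map_le (mfSeq γ k gk h ρ₀ n) hl2 _
      (mfMap_cont hB hBL hCV hM hk hh _ γ) (1 + γ * L) (by positivity) hlip
    rw [← mfSeq_succ] at hstep
    calc varMeas (mfSeq γ k gk h ρ₀ (n + 1))
        ≤ (1 + γ * L) ^ 2 * varMeas (mfSeq γ k gk h ρ₀ n) := hstep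
      _ ≤ (1 + γ * L) ^ 2 * (((1 + γ * L) ^ n) ^ 2 * varMeas ρ₀) :=
          mul_le_mul_of_nonneg_left ih (by positivity)
      _ = ((1 + γ * L) ^ (n + 1)) ^ 2 * varMeas ρ₀ := by ring

/-- The deterministic flow maps of the mean-field dynamics. -/
def zeta (k : Euc d → Euc d → ℝ) (gk : Euc d → Euc d → Euc d) (h : Euc d → Euc d)
    (γ : ℝ) (ρ₀ : Measure (Euc d)) : ℕ → Euc d → Euc d
  | 0 => id
  | n + 1 => fun z => zeta k gk h γ ρ₀ n z
      - γ • drift k gk h (mfSeq γ k gk h ρ₀ n) (zeta k gk h γ ρ₀ n z)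

lemma zeta_cont (hB : 0 ≤ B) (hBL : 0 ≤ BL) (hCV : 0 ≤ CV) (hM : 0 ≤ M)
    (hk : KernelAssumptions B BL k gk) (hh : PotGrad CV M h) (γ : ℝ)
    (ρ₀ : Measure (Euc d)) [IsProbabilityMeasure ρ₀] (hρ₀ : MemLp id 2 ρ₀) :
    ∀ n, Continuous (zeta k gk h γ ρ₀ n) := by
  intro n
  induction n with
  | zero => exact continuous_id
  | succ n ih =>
    haveI := (mf_facts hB hBL hCV hM hk hh γ ρ₀ hρ₀ n).1
    have hc := (mfMap_cont hB hBL hCV hM hk hh (mfSeq γ k gk h ρ₀ n) γ).comp ih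
    exact hc

lemma map_zeta (hB : 0 ≤ B) (hBL : 0 ≤ BL) (hCV : 0 ≤ CV) (hM : 0 ≤ M)
    (hk : KernelAssumptions B BL k gk) (hh : PotGrad CV M h) (γ : ℝ)
    (ρ₀ : Measure (Euc d)) [IsProbabilityMeasure ρ₀] (hρ₀ : MemLp id 2 ρ₀) :
    ∀ n, ρ₀.map (zeta k gk h γ ρ₀ n) = mfSeq γ k gk h ρ₀ n := by
  intro n
  induction n with
  | zero => exact Measure.map_id
  | succ n ih =>
    haveI := (mf_facts hB hBL hCV hM hk hh γ ρ₀ hρ₀ n).1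
    have hTc := mfMap_cont hB hBL hCV hM hk hh (mfSeq γ k gk h ρ₀ n) γ
    have hzc := zeta_cont hB hBL hCV hM hk hh γ ρ₀ hρ₀ n
    have hcomp : ρ₀.map (zeta k gk h γ ρ₀ (n + 1))
        = (ρ₀.map (zeta k gk h γ ρ₀ n)).map
            (fun z => z - γ • drift k gk h (mfSeq γ k gk h ρ₀ n) z) := by
      rw [Measure.map_map hTc.measurable hzc.measurable]
      rfl
    rw [hcomp, ih, mfSeq_succ]

end MF


section KeyVar

open scoped RealInnerProductSpace

variable {d : ℕ} {B BL CV M : ℝ}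
variable {k : Euc d → Euc d → ℝ} {gk : Euc d → Euc d → Euc d} {h : Euc d → Euc d}

lemma Gf_integrable (hB : 0 ≤ B) (hBL : 0 ≤ BL) (hCV : 0 ≤ CV) (hM : 0 ≤ M)
    (hk : KernelAssumptions B BL k gk) (hh : PotGrad CV M h)
    (ρ : Measure (Euc d)) [IsProbabilityMeasure ρ]
    (μ : Measure (Euc d)) [IsFiniteMeasure μ] (z : Euc d) :
    Integrable (fun x => Gf k gk h ρ x z) μ :=
  ⟨((Gf_cont hB hBL hCV hM hk hh ρ).comp
      (continuous_id.prodMk continuous_const)).aestronglyMeasurable,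
    HasFiniteIntegral.of_bounded (C := 2 * (B * (CV + 1)))
      (ae_of_all μ fun x => Gf_bound hB hCV hk hh ρ x z)⟩

set_option maxHeartbeats 1000000 in
lemma key_var (hB : 0 ≤ B) (hBL : 0 ≤ BL) (hCV : 0 ≤ CV) (hM : 0 ≤ M)
    (hk : KernelAssumptions B BL k gk) (hh : PotGrad CV M h)
    (ρ : Measure (Euc d)) [IsProbabilityMeasure ρ] (hρ2 : MemLp id 2 ρ)
    {Ω : Type} [MeasurableSpace Ω] (P : Measure Ω) [IsProbabilityMeasure P]
    (N : ℕ) (hN : 0 < N) (W : ℕ → Ω → Euc d) (hWm : ∀ j, Measurable (W j))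
    (hind : iIndepFun
      (fun j : Fin N => W j) P)
    (hlaw : ∀ j < N, P.map (W j) = ρ) (i : ℕ) (hi : i < N) :
    ∫ ω, ‖(N : ℝ)⁻¹ • ∑ j ∈ Finset.range N, Gf k gk h ρ (W j ω) (W i ω)‖ ^ 2 ∂P
      ≤ 12 * (BL * (CV + 1) + B * M) ^ 2 * varMeas ρ / N := by
  classical
  set L := BL * (CV + 1) + B * M with hLdef
  have hL0 : 0 ≤ L := by positivity
  set C2 : ℝ := 2 * (B * (CV + 1)) with hC2
  have hC20 : 0 ≤ C2 := by positivity
  set G : Euc d → Euc d → Euc d := Gf k gk h ρ with hG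
  have hGc : Continuous fun p : Euc d × Euc d => G p.1 p.2 := Gf_cont hB hBL hCV hM hk hh ρ
  have hGb : ∀ x z, ‖G x z‖ ≤ C2 := fun x z => Gf_bound hB hCV hk hh ρ x z
  set φ : ℕ → ℕ → Ω → ℝ := fun j j' ω => ⟪G (W j ω) (W i ω), G (W j' ω) (W i ω)⟫ with hφ
  have hmG : ∀ j, Measurable fun ω => G (W j ω) (W i ω) := fun j =>
    hGc.measurable.comp ((hWm j).prodMk (hWm i))
  have hφmeas : ∀ j j', Measurable (φ j j') := fun j j' => (hmG j).inner (hmG j')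
  have hφbound : ∀ j j' ω, |φ j j' ω| ≤ C2 ^ 2 := by
    intro j j' ω
    calc |φ j j' ω| ≤ ‖G (W j ω) (W i ω)‖ * ‖G (W j' ω) (W i ω)‖ :=
          abs_real_inner_le_norm _ _
      _ ≤ C2 * C2 := mul_le_mul (hGb _ _) (hGb _ _) (norm_nonneg _) hC20
      _ = C2 ^ 2 := by ring
  have hφint : ∀ j j', Integrable (φ j j') P := fun j j' =>
    ⟨(hφmeas j j').aestronglyMeasurable,
      HasFiniteIntegral.of_bounded (C := C2 ^ 2)
        (ae_of_all P fun ω => by rw [Real.norm_eq_abs]; exact hφbound j j' ω)⟩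
  -- second moment bounds
  have hsq : ∀ j < N, ∫ ω, ‖G (W j ω) (W i ω)‖ ^ 2 ∂P ≤ 4 * L ^ 2 * varMeas ρ := by
    intro j hj
    by_cases hji : j = i
    · subst hji
      have hdiagc : Continuous fun z : Euc d => ‖G z z‖ ^ 2 :=
        ((hGc.comp (continuous_id.prodMk continuous_id)).norm.pow 2)
      have e : ∫ ω, ‖G (W j ω) (W j ω)‖ ^ 2 ∂P = ∫ z, ‖G z z‖ ^ 2 ∂ρ := by
        rw [← hlaw j hj, integral_map (hWm j).aemeasurable hdiagc.aestronglyMeasurable]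
      rw [e]
      exact Gf_diag_sq_integral_le hB hBL hCV hM hk hh ρ hρ2
    · have hIF : IndepFun (W j) (W i) P :=
        hind.indepFun (i := ⟨j, hj⟩) (j := ⟨i, hi⟩) (by simpa [Fin.ext_iff] using hji)
      have hmap : P.map (fun ω => (W j ω, W i ω)) = ρ.prod ρ := by
        rw [(indepFun_iff_map_prod_eq_prod_map_map (hWm j).aemeasurable
          (hWm i).aemeasurable).mp hIF, hlaw j hj, hlaw i hi]
      have hpm : Measurable fun ω => (W j ω, W i ω) := (hWm j).prodMk (hWm i)
      have hcont : Continuous fun p : Euc d × Euc d => ‖G p.1 p.2‖ ^ 2 := hGc.norm.pow 2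
      have e1 : ∫ ω, ‖G (W j ω) (W i ω)‖ ^ 2 ∂P
          = ∫ p : Euc d × Euc d, ‖G p.1 p.2‖ ^ 2 ∂(ρ.prod ρ) := by
        rw [← hmap, integral_map hpm.aemeasurable hcont.aestronglyMeasurable]
      have hint : Integrable (fun p : Euc d × Euc d => ‖G p.1 p.2‖ ^ 2) (ρ.prod ρ) :=
        ⟨hcont.aestronglyMeasurable,
          HasFiniteIntegral.of_bounded (C := C2 ^ 2) (ae_of_all _ fun p => by
            rw [Real.norm_eq_abs, abs_of_nonneg (sq_nonneg _)]
            exact pow_le_pow_left₀ (norm_nonneg _) (hGb p.1 p.2) 2)⟩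
      have e2 : ∫ p : Euc d × Euc d, ‖G p.1 p.2‖ ^ 2 ∂(ρ.prod ρ)
          = ∫ z, (∫ x, ‖G x z‖ ^ 2 ∂ρ) ∂ρ := integral_prod_symm _ hint
      have e3 : ∫ z, (∫ x, ‖G x z‖ ^ 2 ∂ρ) ∂ρ ≤ 4 * L ^ 2 * varMeas ρ := by
        calc ∫ z, (∫ x, ‖G x z‖ ^ 2 ∂ρ) ∂ρ ≤ ∫ _z, 4 * L ^ 2 * varMeas ρ ∂ρ :=
              integral_mono_of_nonneg (ae_of_all _ fun z =>
                integral_nonneg fun x => sq_nonneg _) (integrable_const _)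
                (ae_of_all _ fun z => Gf_sq_integral_le hB hBL hCV hM hk hh ρ hρ2 z)
          _ = 4 * L ^ 2 * varMeas ρ := by simp
      rw [e1, e2]; exact e3
  -- MemLp for Hölder
  have hmem : ∀ j, MemLp (fun ω => ‖G (W j ω) (W i ω)‖) 2 P := by
    intro j
    refine MemLp.mono_exponent ?_ (le_top : (2 : ℝ≥0∞) ≤ ⊤)
    refine memLp_top_of_bound (hmG j).norm.aestronglyMeasurable C2
      (ae_of_all P fun ω => ?_)
    rw [Real.norm_eq_abs, abs_of_nonneg (norm_nonneg _)]
    exact hGb _ _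
  -- general bound per pair
  have hbnd : ∀ j < N, ∀ j' < N, |∫ ω, φ j j' ω ∂P| ≤ 4 * L ^ 2 * varMeas ρ := by
    intro j hj j' hj'
    have hprod_int : Integrable (fun ω => ‖G (W j ω) (W i ω)‖ * ‖G (W j' ω) (W i ω)‖) P :=
      ⟨((hmG j).norm.mul (hmG j').norm).aestronglyMeasurable,
        HasFiniteIntegral.of_bounded (C := C2 * C2) (ae_of_all P fun ω => by
          rw [Real.norm_eq_abs, abs_of_nonneg (mul_nonneg (norm_nonneg _) (norm_nonneg _))]
          exact mul_le_mul (hGb _ _) (hGb _ _) (norm_nonneg _) hC20)⟩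
    have habs : |∫ ω, φ j j' ω ∂P| ≤
        ∫ ω, ‖G (W j ω) (W i ω)‖ * ‖G (W j' ω) (W i ω)‖ ∂P := by
      calc |∫ ω, φ j j' ω ∂P| ≤ ∫ ω, |φ j j' ω| ∂P := by
            simpa [Real.norm_eq_abs] using norm_integral_le_integral_norm (f := φ j j') (μ := P)
        _ ≤ ∫ ω, ‖G (W j ω) (W i ω)‖ * ‖G (W j' ω) (W i ω)‖ ∂P :=
            integral_mono_of_nonneg (ae_of_all _ fun ω => abs_nonneg _) hprod_int
              (ae_of_all _ fun ω => abs_real_inner_le_norm _ _)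
    have hH := integral_mul_le_sqrt_mul_sqrt (fun ω => ‖G (W j ω) (W i ω)‖)
      (fun ω => ‖G (W j' ω) (W i ω)‖) (fun _ => norm_nonneg _) (fun _ => norm_nonneg _)
      (hmem j) (hmem j')
    have hcc : 0 ≤ 4 * L ^ 2 * varMeas ρ := mul_nonneg (by positivity) (varMeas_nonneg ρ)
    have hs1 : Real.sqrt (∫ ω, ‖G (W j ω) (W i ω)‖ ^ 2 ∂P)
        ≤ Real.sqrt (4 * L ^ 2 * varMeas ρ) := Real.sqrt_le_sqrt (hsq j hj)
    have hs2 : Real.sqrt (∫ ω, ‖G (W j' ω) (W i ω)‖ ^ 2 ∂P)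
        ≤ Real.sqrt (4 * L ^ 2 * varMeas ρ) := Real.sqrt_le_sqrt (hsq j' hj')
    calc |∫ ω, φ j j' ω ∂P|
        ≤ ∫ ω, ‖G (W j ω) (W i ω)‖ * ‖G (W j' ω) (W i ω)‖ ∂P := habs
      _ ≤ Real.sqrt (∫ ω, ‖G (W j ω) (W i ω)‖ ^ 2 ∂P) *
          Real.sqrt (∫ ω, ‖G (W j' ω) (W i ω)‖ ^ 2 ∂P) := hH
      _ ≤ Real.sqrt (4 * L ^ 2 * varMeas ρ) * Real.sqrt (4 * L ^ 2 * varMeas ρ) :=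
          mul_le_mul hs1 hs2 (Real.sqrt_nonneg _) (Real.sqrt_nonneg _)
      _ = 4 * L ^ 2 * varMeas ρ := Real.mul_self_sqrt hcc
  -- vanishing of cross terms
  have hzero : ∀ j < N, ∀ j' < N, ¬ j = j' → ¬ j = i → ¬ j' = i →
      ∫ ω, φ j j' ω ∂P = 0 := by
    intro j hj j' hj' hjj' hji hj'i
    have hpairm : Measurable fun ω => (W j' ω, W i ω) := (hWm j').prodMk (hWm i)
    have hIF : IndepFun (W j) (fun ω => (W j' ω, W i ω)) P := by
      have hp := hind.indepFun_prodMk (fun a => hWm a) ⟨j', hj'⟩ ⟨i, hi⟩ ⟨j, hj⟩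
        (by simpa [Fin.ext_iff] using (Ne.symm hjj' : j' ≠ j))
        (by simpa [Fin.ext_iff] using (Ne.symm hji : i ≠ j))
      exact hp.symm
    set ν : Measure (Euc d × Euc d) := P.map (fun ω => (W j' ω, W i ω)) with hν
    haveI : IsProbabilityMeasure ν := Measure.isProbabilityMeasure_map hpairm.aemeasurable
    have htriple : Measurable fun ω => (W j ω, (W j' ω, W i ω)) := (hWm j).prodMk hpairm
    have hmap : P.map (fun ω => (W j ω, (W j' ω, W i ω))) = ρ.prod ν := by
      rw [(indepFun_iff_map_prod_eq_prod_map_map (hWm j).aemeasurable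
        hpairm.aemeasurable).mp hIF, hlaw j hj]
    set Φ : Euc d × (Euc d × Euc d) → ℝ := fun q => ⟪G q.1 q.2.2, G q.2.1 q.2.2⟫ with hΦ
    have hΦc : Continuous Φ := by
      have c1 : Continuous fun q : Euc d × (Euc d × Euc d) => G q.1 q.2.2 :=
        hGc.comp (continuous_fst.prodMk (continuous_snd.comp continuous_snd))
      have c2 : Continuous fun q : Euc d × (Euc d × Euc d) => G q.2.1 q.2.2 :=
        hGc.comp ((continuous_fst.comp continuous_snd).prodMk
          (continuous_snd.comp continuous_snd))
      exact c1.inner c2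
    have hΦint : Integrable Φ (ρ.prod ν) :=
      ⟨hΦc.aestronglyMeasurable,
        HasFiniteIntegral.of_bounded (C := C2 ^ 2) (ae_of_all _ fun q => by
          rw [Real.norm_eq_abs]
          calc |Φ q| ≤ ‖G q.1 q.2.2‖ * ‖G q.2.1 q.2.2‖ := abs_real_inner_le_norm _ _
            _ ≤ C2 * C2 := mul_le_mul (hGb _ _) (hGb _ _) (norm_nonneg _) hC20
            _ = C2 ^ 2 := by ring)⟩
    have e1 : ∫ q, Φ q ∂(ρ.prod ν) = ∫ ω, φ j j' ω ∂P := by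
      rw [← hmap, integral_map htriple.aemeasurable hΦc.aestronglyMeasurable]
    have e2 : ∫ q, Φ q ∂(ρ.prod ν) = ∫ w, (∫ x, Φ (x, w) ∂ρ) ∂ν :=
      integral_prod_symm _ hΦint
    have e3 : ∀ w : Euc d × Euc d, ∫ x, Φ (x, w) ∂ρ = 0 := by
      intro w
      have hcomm : ∀ x, Φ (x, w) = ⟪G w.1 w.2, G x w.2⟫ := fun x => real_inner_comm _ _
      calc ∫ x, Φ (x, w) ∂ρ = ∫ x, (⟪G w.1 w.2, G x w.2⟫ : ℝ) ∂ρ :=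
            integral_congr_ae (ae_of_all _ hcomm)
        _ = ⟪G w.1 w.2, ∫ x, G x w.2 ∂ρ⟫ :=
            integral_inner (Gf_integrable hB hBL hCV hM hk hh ρ ρ w.2) _
        _ = 0 := by
            rw [hG, Gf_mean_zero hB hBL hCV hM hk hh ρ w.2, inner_zero_right]
    rw [← e1, e2]
    calc ∫ w, (∫ x, Φ (x, w) ∂ρ) ∂ν = ∫ _w, (0 : ℝ) ∂ν :=
          integral_congr_ae (ae_of_all _ e3)
      _ = 0 := integral_zero _ _
  -- expansion of the squared norm
  have hpt : ∀ ω, ‖∑ j ∈ Finset.range N, G (W j ω) (W i ω)‖ ^ 2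
      = ∑ j ∈ Finset.range N, ∑ j' ∈ Finset.range N, φ j j' ω := by
    intro ω
    rw [← real_inner_self_eq_norm_sq, sum_inner]
    exact Finset.sum_congr rfl fun j _ => inner_sum _ _ _
  have hsum : ∫ ω, ‖∑ j ∈ Finset.range N, G (W j ω) (W i ω)‖ ^ 2 ∂P
      = ∑ j ∈ Finset.range N, ∑ j' ∈ Finset.range N, ∫ ω, φ j j' ω ∂P := by
    calc ∫ ω, ‖∑ j ∈ Finset.range N, G (W j ω) (W i ω)‖ ^ 2 ∂P
        = ∫ ω, ∑ j ∈ Finset.range N, ∑ j' ∈ Finset.range N, φ j j' ω ∂P :=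
          integral_congr_ae (ae_of_all _ hpt)
      _ = ∑ j ∈ Finset.range N, ∫ ω, ∑ j' ∈ Finset.range N, φ j j' ω ∂P :=
          integral_finset_sum _ (fun j _ => integrable_finset_sum _ (fun j' _ => hφint j j'))
      _ = ∑ j ∈ Finset.range N, ∑ j' ∈ Finset.range N, ∫ ω, φ j j' ω ∂P :=
          Finset.sum_congr rfl fun j _ => integral_finset_sum _ (fun j' _ => hφint j j')
  -- counting
  set c := 4 * L ^ 2 * varMeas ρ with hc
  have hc0 : 0 ≤ c := mul_nonneg (by positivity) (varMeas_nonneg ρ)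
  have hterm : ∀ j ∈ Finset.range N, ∀ j' ∈ Finset.range N,
      ∫ ω, φ j j' ω ∂P ≤ (if j = j' then c else 0) + (if j = i then c else 0)
        + (if j' = i then c else 0) := by
    intro j hj j' hj'
    rw [Finset.mem_range] at hj hj'
    have hnn : ∀ (p : Prop) [Decidable p], (0:ℝ) ≤ if p then c else 0 := by
      intro p hp; split_ifs <;> simp [hc0]
    by_cases e1 : j = j'
    · have hle := (abs_le.mp (hbnd j hj j' hj')).2
      rw [if_pos e1]
      have h2 := hnn (j = i); have h3 := hnn (j' = i)
      linarith
    by_cases e2 : j = i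
    · have hle := (abs_le.mp (hbnd j hj j' hj')).2
      rw [if_pos e2]
      have h2 := hnn (j = j'); have h3 := hnn (j' = i)
      linarith
    by_cases e3 : j' = i
    · have hle := (abs_le.mp (hbnd j hj j' hj')).2
      rw [if_pos e3]
      have h2 := hnn (j = j'); have h3 := hnn (j = i)
      linarith
    · rw [hzero j hj j' hj' e1 e2 e3, if_neg e1, if_neg e2, if_neg e3]
      norm_num
  have hcount : ∑ j ∈ Finset.range N, ∑ j' ∈ Finset.range N, ∫ ω, φ j j' ω ∂P
      ≤ 3 * N * c := by
    have t1 : ∑ j ∈ Finset.range N, ∑ j' ∈ Finset.range N, (if j = j' then c else 0)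
        = N * c := by
      have hrow : ∀ j ∈ Finset.range N,
          ∑ j' ∈ Finset.range N, (if j = j' then c else 0) = c := by
        intro j hj
        rw [Finset.sum_ite_eq]
        exact if_pos hj
      rw [Finset.sum_congr rfl hrow, Finset.sum_const, Finset.card_range, nsmul_eq_mul]
    have t2 : ∑ j ∈ Finset.range N, ∑ j' ∈ Finset.range N, (if j = i then c else 0)
        = N * c := by
      have hrow : ∀ j ∈ Finset.range N,
          ∑ j' ∈ Finset.range N, (if j = i then c else 0)
            = if j = i then (N : ℝ) * c else 0 := by
        intro j hj
        split_ifs with hji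
        · simp [hji, Finset.sum_const, Finset.card_range, nsmul_eq_mul]
        · simp [hji]
      rw [Finset.sum_congr rfl hrow, Finset.sum_ite_eq']
      rw [if_pos (Finset.mem_range.mpr hi)]
    have t3 : ∑ j ∈ Finset.range N, ∑ j' ∈ Finset.range N, (if j' = i then c else 0)
        = N * c := by
      have hrow : ∀ j ∈ Finset.range N,
          ∑ j' ∈ Finset.range N, (if j' = i then c else 0) = c := by
        intro j hj
        rw [Finset.sum_ite_eq']
        exact if_pos (Finset.mem_range.mpr hi)
      rw [Finset.sum_congr rfl hrow, Finset.sum_const, Finset.card_range, nsmul_eq_mul]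
    calc ∑ j ∈ Finset.range N, ∑ j' ∈ Finset.range N, ∫ ω, φ j j' ω ∂P
        ≤ ∑ j ∈ Finset.range N, ∑ j' ∈ Finset.range N,
            ((if j = j' then c else 0) + (if j = i then c else 0)
              + (if j' = i then c else 0)) :=
          Finset.sum_le_sum fun j hj => Finset.sum_le_sum fun j' hj' => hterm j hj j' hj'
      _ = (∑ j ∈ Finset.range N, ∑ j' ∈ Finset.range N, (if j = j' then c else 0))
          + (∑ j ∈ Finset.range N, ∑ j' ∈ Finset.range N, (if j = i then c else 0))
          + (∑ j ∈ Finset.range N, ∑ j' ∈ Finset.range N, (if j' = i then c else 0)) := by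
          simp_rw [Finset.sum_add_distrib]
      _ = 3 * N * c := by rw [t1, t2, t3]; ring
  -- wrap up
  have hmain : ∫ ω, ‖(N : ℝ)⁻¹ • ∑ j ∈ Finset.range N, G (W j ω) (W i ω)‖ ^ 2 ∂P
      = ((N : ℝ)⁻¹) ^ 2 * ∫ ω, ‖∑ j ∈ Finset.range N, G (W j ω) (W i ω)‖ ^ 2 ∂P := by
    have hptw : ∀ ω, ‖(N : ℝ)⁻¹ • ∑ j ∈ Finset.range N, G (W j ω) (W i ω)‖ ^ 2
        = ((N : ℝ)⁻¹) ^ 2 * ‖∑ j ∈ Finset.range N, G (W j ω) (W i ω)‖ ^ 2 := by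
      intro ω
      rw [norm_smul, mul_pow, Real.norm_eq_abs, abs_of_nonneg (by positivity : (0:ℝ) ≤ (N:ℝ)⁻¹)]
    rw [integral_congr_ae (ae_of_all _ hptw), integral_const_mul]
  have hNpos : (0 : ℝ) < (N : ℝ) := by exact_mod_cast hN
  calc ∫ ω, ‖(N : ℝ)⁻¹ • ∑ j ∈ Finset.range N, G (W j ω) (W i ω)‖ ^ 2 ∂P
      = ((N : ℝ)⁻¹) ^ 2 * ∫ ω, ‖∑ j ∈ Finset.range N, G (W j ω) (W i ω)‖ ^ 2 ∂P := hmain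
    _ ≤ ((N : ℝ)⁻¹) ^ 2 * (3 * N * c) := by
        refine mul_le_mul_of_nonneg_left ?_ (by positivity)
        rw [hsum]; exact hcount
    _ = 12 * L ^ 2 * varMeas ρ / N := by
        rw [hc]; field_simp; ring

end KeyVar


section Step

variable {d : ℕ} {B BL CV M : ℝ}
variable {k : Euc d → Euc d → ℝ} {gk : Euc d → Euc d → Euc d} {h : Euc d → Euc d}

lemma sqrt_integral_const_mul_sq {α : Type*} [MeasurableSpace α] (μ : Measure α)
    (c : ℝ) (hc : 0 ≤ c) (g : α → ℝ) :
    Real.sqrt (∫ x, (c * g x) ^ 2 ∂μ) = c * Real.sqrt (∫ x, g x ^ 2 ∂μ) := by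
  have hpt : ∀ x, (c * g x) ^ 2 = c ^ 2 * g x ^ 2 := fun x => by ring
  rw [integral_congr_ae (ae_of_all _ hpt), integral_const_mul,
    Real.sqrt_mul (sq_nonneg c), Real.sqrt_sq hc]

lemma sqrt_sum_const_mul_sq {ι : Type*} (s : Finset ι) (c : ℝ) (hc : 0 ≤ c) (f : ι → ℝ) :
    Real.sqrt (∑ i ∈ s, (c * f i) ^ 2) = c * Real.sqrt (∑ i ∈ s, f i ^ 2) := by
  have hpt : ∀ i, (c * f i) ^ 2 = c ^ 2 * f i ^ 2 := fun i => by ring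
  simp_rw [hpt]
  rw [← Finset.mul_sum, Real.sqrt_mul (sq_nonneg c), Real.sqrt_sq hc]

set_option maxHeartbeats 1000000 in
lemma step_bound (hB : 0 < B) (hBL : 0 < BL) (hCV : 0 < CV) (hM : 0 < M)
    (hk : KernelAssumptions B BL k gk) (hh : PotGrad CV M h) {γ : ℝ} (hγ : 0 < γ)
    (ρ₀ : Measure (Euc d)) [IsProbabilityMeasure ρ₀] (hρ₀2 : MemLp id 2 ρ₀)
    (N : ℕ) (hN : 0 < N)
    {Ω : Type} [MeasurableSpace Ω] (P : Measure Ω) [IsProbabilityMeasure P]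
    (X Z : ℕ → ℕ → Ω → Euc d) (hXm : ∀ n i, Measurable (X n i)) (n : ℕ)
    (hZm : ∀ j < N, Measurable (Z n j))
    (hZind : iIndepFun
      (fun j : Fin N => Z n j) P)
    (hZlaw : ∀ j < N, P.map (Z n j) = mfSeq γ k gk h ρ₀ n)
    (hXrec : ∀ i < N, ∀ ω, X (n + 1) i ω
      = X n i ω - γ • drift k gk h (empMeas N (fun j => X n j ω)) (X n i ω))
    (hZrec : ∀ j < N, ∀ ω, Z (n + 1) j ω
      = Z n j ω - γ • drift k gk h (mfSeq γ k gk h ρ₀ n) (Z n j ω))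
    (K : ℝ) (hK : 0 ≤ K) (hΔb : ∀ j < N, ∀ ω, ‖X n j ω - Z n j ω‖ ≤ K) :
    Real.sqrt (∑ i ∈ Finset.range N, ∫ ω, ‖X (n + 1) i ω - Z (n + 1) i ω‖ ^ 2 ∂P)
      ≤ (1 + 2 * γ * (BL * (CV + 1) + B * M)) *
          Real.sqrt (∑ i ∈ Finset.range N, ∫ ω, ‖X n i ω - Z n i ω‖ ^ 2 ∂P)
        + γ * Real.sqrt (12 * (BL * (CV + 1) + B * M) ^ 2
            * varMeas (mfSeq γ k gk h ρ₀ n)) := by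
  classical
  have hB0 := hB.le; have hBL0 := hBL.le; have hCV0 := hCV.le; have hM0 := hM.le
  set L := BL * (CV + 1) + B * M with hLdef
  have hL0 : 0 ≤ L := by positivity
  set C2 : ℝ := 2 * (B * (CV + 1)) with hC2def
  have hC20 : 0 ≤ C2 := by positivity
  set ρ := mfSeq γ k gk h ρ₀ n with hρdef
  haveI hρprob : IsProbabilityMeasure ρ := (mf_facts hB0 hBL0 hCV0 hM0 hk hh γ ρ₀ hρ₀2 n).1
  have hρ2 : MemLp id 2 ρ := (mf_facts hB0 hBL0 hCV0 hM0 hk hh γ ρ₀ hρ₀2 n).2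
  have hNR : (0 : ℝ) < (N : ℝ) := by exact_mod_cast hN
  have hNne : (N : ℝ) ≠ 0 := ne_of_gt hNR
  have hGc : Continuous fun p : Euc d × Euc d => Gf k gk h ρ p.1 p.2 :=
    Gf_cont hB0 hBL0 hCV0 hM0 hk hh ρ
  have hΔm : ∀ j < N, Measurable fun ω => X n j ω - Z n j ω :=
    fun j hj => (hXm n j).sub (hZm j hj)
  have hΔmem : ∀ j < N, MemLp (fun ω => ‖X n j ω - Z n j ω‖) 2 P := by
    intro j hj
    refine MemLp.mono_exponent ?_ (le_top : (2 : ℝ≥0∞) ≤ ⊤)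
    refine memLp_top_of_bound (hΔm j hj).norm.aestronglyMeasurable K
      (ae_of_all P fun ω => ?_)
    rw [Real.norm_eq_abs, abs_of_nonneg (norm_nonneg _)]
    exact hΔb j hj ω
  have hΔint2 : ∀ j < N, Integrable (fun ω => ‖X n j ω - Z n j ω‖ ^ 2) P :=
    fun j hj => (hΔmem j hj).integrable_sq
  set S : Ω → ℝ := fun ω => (N : ℝ)⁻¹ * ∑ j ∈ Finset.range N, ‖X n j ω - Z n j ω‖
    with hSdef
  have hS0 : ∀ ω, 0 ≤ S ω := fun ω =>
    mul_nonneg (by positivity) (Finset.sum_nonneg fun j _ => norm_nonneg _)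
  have hSm : Measurable S :=
    (Finset.measurable_sum _ fun j hj => (hΔm j (Finset.mem_range.mp hj)).norm).const_mul _
  have hSb : ∀ ω, S ω ≤ K := by
    intro ω
    have hsum : ∑ j ∈ Finset.range N, ‖X n j ω - Z n j ω‖ ≤ (N : ℝ) * K := by
      calc ∑ j ∈ Finset.range N, ‖X n j ω - Z n j ω‖
          ≤ ∑ _j ∈ Finset.range N, K :=
            Finset.sum_le_sum fun j hj => hΔb j (Finset.mem_range.mp hj) ω
        _ = (N : ℝ) * K := by simp [mul_comm]
    calc S ω ≤ (N : ℝ)⁻¹ * ((N : ℝ) * K) :=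
          mul_le_mul_of_nonneg_left hsum (by positivity)
      _ = K := by field_simp
  have hSmem : MemLp S 2 P := by
    refine MemLp.mono_exponent ?_ (le_top : (2 : ℝ≥0∞) ≤ ⊤)
    refine memLp_top_of_bound hSm.aestronglyMeasurable K (ae_of_all P fun ω => ?_)
    rw [Real.norm_eq_abs, abs_of_nonneg (hS0 ω)]
    exact hSb ω
  set b : ℕ → Ω → ℝ := fun i ω =>
    ‖(N : ℝ)⁻¹ • ∑ j ∈ Finset.range N, Gf k gk h ρ (Z n j ω) (Z n i ω)‖ with hbdef
  have hbm : ∀ i < N, Measurable (b i) := by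
    intro i hi
    show Measurable fun ω => ‖(N : ℝ)⁻¹ • ∑ j ∈ Finset.range N, Gf k gk h ρ (Z n j ω) (Z n i ω)‖
    exact ((Finset.measurable_sum _ fun j hj =>
      hGc.measurable2 (hZm j (Finset.mem_range.mp hj))
        (hZm i hi)).fun_const_smul _).norm
  have hbb : ∀ i ω, b i ω ≤ C2 := by
    intro i ω
    have hsum : ‖∑ j ∈ Finset.range N, Gf k gk h ρ (Z n j ω) (Z n i ω)‖
        ≤ (N : ℝ) * C2 := by
      calc ‖∑ j ∈ Finset.range N, Gf k gk h ρ (Z n j ω) (Z n i ω)‖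
          ≤ ∑ j ∈ Finset.range N, ‖Gf k gk h ρ (Z n j ω) (Z n i ω)‖ := norm_sum_le _ _
        _ ≤ ∑ _j ∈ Finset.range N, C2 :=
            Finset.sum_le_sum fun j _ => Gf_bound hB0 hCV0 hk hh ρ _ _
        _ = (N : ℝ) * C2 := by simp [mul_comm]
    calc b i ω = ‖(N : ℝ)⁻¹‖ * ‖∑ j ∈ Finset.range N, Gf k gk h ρ (Z n j ω) (Z n i ω)‖ :=
          norm_smul _ _
      _ ≤ (N : ℝ)⁻¹ * ((N : ℝ) * C2) := by
          rw [Real.norm_eq_abs, abs_of_nonneg (by positivity : (0:ℝ) ≤ (N : ℝ)⁻¹)]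
          exact mul_le_mul_of_nonneg_left hsum (by positivity)
      _ = C2 := by field_simp
  have hb0 : ∀ i ω, 0 ≤ b i ω := fun i ω => norm_nonneg _
  have hbmem : ∀ i < N, MemLp (b i) 2 P := by
    intro i hi
    refine MemLp.mono_exponent ?_ (le_top : (2 : ℝ≥0∞) ≤ ⊤)
    refine memLp_top_of_bound (hbm i hi).aestronglyMeasurable C2 (ae_of_all P fun ω => ?_)
    rw [Real.norm_eq_abs, abs_of_nonneg (hb0 i ω)]
    exact hbb i ω
  have hβ : ∀ i < N, ∫ ω, b i ω ^ 2 ∂P ≤ 12 * L ^ 2 * varMeas ρ / N := by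
    intro i hi
    set W : ℕ → Ω → Euc d := fun j => if j < N then Z n j else fun _ => 0 with hWdef
    have hWm : ∀ j, Measurable (W j) := by
      intro j
      by_cases hj : j < N
      · simpa [hWdef, hj] using hZm j hj
      · simpa [hWdef, hj] using (measurable_const : Measurable fun _ : Ω => (0 : Euc d))
    have hWeq : ∀ j < N, W j = Z n j := fun j hj => by simp [hWdef, hj]
    have hWind : iIndepFun
        (fun j : Fin N => W j) P := by
      have heq2 : (fun j : Fin N => W (j : ℕ)) = fun j : Fin N => Z n j := by
        funext j; exact hWeq j j.isLt
      rw [heq2]; exact hZind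
    have hWlaw : ∀ j < N, P.map (W j) = ρ := fun j hj => by
      rw [hWeq j hj]; exact hZlaw j hj
    have hkv := key_var hB0 hBL0 hCV0 hM0 hk hh ρ hρ2 P N hN W hWm hWind hWlaw i hi
    have heq : ∀ ω, ‖(N : ℝ)⁻¹ • ∑ j ∈ Finset.range N, Gf k gk h ρ (W j ω) (W i ω)‖ ^ 2
        = b i ω ^ 2 := by
      intro ω
      have hsum : ∑ j ∈ Finset.range N, Gf k gk h ρ (W j ω) (W i ω)
          = ∑ j ∈ Finset.range N, Gf k gk h ρ (Z n j ω) (Z n i ω) := by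
        refine Finset.sum_congr rfl fun j hj => ?_
        rw [hWeq j (Finset.mem_range.mp hj), hWeq i hi]
      simp only [hbdef]
      rw [hsum]
    calc ∫ ω, b i ω ^ 2 ∂P
        = ∫ ω, ‖(N : ℝ)⁻¹ • ∑ j ∈ Finset.range N, Gf k gk h ρ (W j ω) (W i ω)‖ ^ 2 ∂P :=
          (integral_congr_ae (ae_of_all _ heq)).symm
      _ ≤ 12 * L ^ 2 * varMeas ρ / N := hkv
  -- pointwise decomposition
  have hid : ∀ i < N, ∀ ω, X (n + 1) i ω - Z (n + 1) i ω
      = (X n i ω - Z n i ω)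
        + γ • ((N : ℝ)⁻¹ • ∑ j ∈ Finset.range N,
            (Fk k gk h (X n j ω) (X n i ω) - Fk k gk h (Z n j ω) (Z n i ω)))
        + γ • ((N : ℝ)⁻¹ • ∑ j ∈ Finset.range N,
            Gf k gk h ρ (Z n j ω) (Z n i ω)) := by
    intro i hi ω
    rw [hXrec i hi ω, hZrec i hi ω,
      drift_emp hB0 hBL0 hCV0 hM0 hk hh N (fun j => X n j ω) (X n i ω),
      drift_eq]
    have hs1 : ∑ j ∈ Finset.range N,
        (Fk k gk h (X n j ω) (X n i ω) - Fk k gk h (Z n j ω) (Z n i ω))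
        = (∑ j ∈ Finset.range N, Fk k gk h (X n j ω) (X n i ω))
          - ∑ j ∈ Finset.range N, Fk k gk h (Z n j ω) (Z n i ω) :=
      Finset.sum_sub_distrib _ _
    have hs2 : ∑ j ∈ Finset.range N, Gf k gk h ρ (Z n j ω) (Z n i ω)
        = (∑ j ∈ Finset.range N, Fk k gk h (Z n j ω) (Z n i ω))
          - (N : ℝ) • ∫ x, Fk k gk h x (Z n i ω) ∂ρ := by
      unfold Gf
      rw [Finset.sum_sub_distrib, Finset.sum_const, Finset.card_range,
        ← Nat.cast_smul_eq_nsmul ℝ]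
    rw [hs1, hs2]
    simp only [smul_sub, smul_neg, smul_smul]
    rw [inv_mul_cancel₀ hNne, mul_one]
    abel
  -- pointwise norm bound
  have hptw : ∀ i < N, ∀ ω, ‖X (n + 1) i ω - Z (n + 1) i ω‖
      ≤ ((1 + γ * L) * ‖X n i ω - Z n i ω‖ + γ * L * S ω) + γ * b i ω := by
    intro i hi ω
    rw [hid i hi ω]
    have t3 : ‖γ • ((N : ℝ)⁻¹ • ∑ j ∈ Finset.range N,
        Gf k gk h ρ (Z n j ω) (Z n i ω))‖ = γ * b i ω := by
      rw [norm_smul, Real.norm_eq_abs, abs_of_nonneg hγ.le]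
    have t2 : ‖γ • ((N : ℝ)⁻¹ • ∑ j ∈ Finset.range N,
        (Fk k gk h (X n j ω) (X n i ω) - Fk k gk h (Z n j ω) (Z n i ω)))‖
        ≤ γ * L * ‖X n i ω - Z n i ω‖ + γ * L * S ω := by
      have hsumb : ‖∑ j ∈ Finset.range N,
          (Fk k gk h (X n j ω) (X n i ω) - Fk k gk h (Z n j ω) (Z n i ω))‖
          ≤ L * ((∑ j ∈ Finset.range N, ‖X n j ω - Z n j ω‖)
              + (N : ℝ) * ‖X n i ω - Z n i ω‖) := by
        calc ‖∑ j ∈ Finset.range N,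
            (Fk k gk h (X n j ω) (X n i ω) - Fk k gk h (Z n j ω) (Z n i ω))‖
            ≤ ∑ j ∈ Finset.range N,
                L * (‖X n j ω - Z n j ω‖ + ‖X n i ω - Z n i ω‖) :=
              (norm_sum_le _ _).trans (Finset.sum_le_sum fun j hj =>
                Fk_lip hB0 hBL0 hCV0 hM0 hk hh _ _ _ _)
          _ = L * ((∑ j ∈ Finset.range N, ‖X n j ω - Z n j ω‖)
              + (N : ℝ) * ‖X n i ω - Z n i ω‖) := by
              rw [← Finset.mul_sum, Finset.sum_add_distrib, Finset.sum_const,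
                Finset.card_range, nsmul_eq_mul]
      calc ‖γ • ((N : ℝ)⁻¹ • ∑ j ∈ Finset.range N,
            (Fk k gk h (X n j ω) (X n i ω) - Fk k gk h (Z n j ω) (Z n i ω)))‖
          = γ * ((N : ℝ)⁻¹ * ‖∑ j ∈ Finset.range N,
              (Fk k gk h (X n j ω) (X n i ω) - Fk k gk h (Z n j ω) (Z n i ω))‖) := by
            rw [norm_smul, norm_smul, Real.norm_eq_abs, abs_of_nonneg hγ.le,
              Real.norm_eq_abs, abs_of_nonneg (by positivity : (0:ℝ) ≤ (N : ℝ)⁻¹)]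
        _ ≤ γ * ((N : ℝ)⁻¹ * (L * ((∑ j ∈ Finset.range N, ‖X n j ω - Z n j ω‖)
              + (N : ℝ) * ‖X n i ω - Z n i ω‖))) := by
            exact mul_le_mul_of_nonneg_left
              (mul_le_mul_of_nonneg_left hsumb (by positivity)) hγ.le
        _ = γ * L * ‖X n i ω - Z n i ω‖ + γ * L * S ω := by
            simp only [hSdef]
            field_simp
            ring
    calc ‖(X n i ω - Z n i ω)
        + γ • ((N : ℝ)⁻¹ • ∑ j ∈ Finset.range N,
            (Fk k gk h (X n j ω) (X n i ω) - Fk k gk h (Z n j ω) (Z n i ω)))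
        + γ • ((N : ℝ)⁻¹ • ∑ j ∈ Finset.range N, Gf k gk h ρ (Z n j ω) (Z n i ω))‖
        ≤ ‖(X n i ω - Z n i ω)
            + γ • ((N : ℝ)⁻¹ • ∑ j ∈ Finset.range N,
              (Fk k gk h (X n j ω) (X n i ω) - Fk k gk h (Z n j ω) (Z n i ω)))‖
          + ‖γ • ((N : ℝ)⁻¹ • ∑ j ∈ Finset.range N,
              Gf k gk h ρ (Z n j ω) (Z n i ω))‖ := norm_add_le _ _
      _ ≤ (‖X n i ω - Z n i ω‖
            + ‖γ • ((N : ℝ)⁻¹ • ∑ j ∈ Finset.range N,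
              (Fk k gk h (X n j ω) (X n i ω) - Fk k gk h (Z n j ω) (Z n i ω)))‖)
          + ‖γ • ((N : ℝ)⁻¹ • ∑ j ∈ Finset.range N,
              Gf k gk h ρ (Z n j ω) (Z n i ω))‖ :=
          add_le_add_left (norm_add_le _ _) _
      _ ≤ (‖X n i ω - Z n i ω‖ + (γ * L * ‖X n i ω - Z n i ω‖ + γ * L * S ω))
          + γ * b i ω := by
          rw [← t3]
          exact add_le_add_left (add_le_add_right t2 _) _
      _ = ((1 + γ * L) * ‖X n i ω - Z n i ω‖ + γ * L * S ω) + γ * b i ω := by ring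
  -- per-particle L² bound
  have hLi : ∀ i < N, Real.sqrt (∫ ω, ‖X (n + 1) i ω - Z (n + 1) i ω‖ ^ 2 ∂P)
      ≤ ((1 + γ * L) * Real.sqrt (∫ ω, ‖X n i ω - Z n i ω‖ ^ 2 ∂P)
          + γ * L * Real.sqrt (∫ ω, S ω ^ 2 ∂P))
        + γ * Real.sqrt (∫ ω, b i ω ^ 2 ∂P) := by
    intro i hi
    have hf1mem : MemLp (fun ω => (1 + γ * L) * ‖X n i ω - Z n i ω‖ + γ * L * S ω) 2 P :=
      ((hΔmem i hi).const_mul (1 + γ * L)).add (hSmem.const_mul (γ * L))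
    have hf2mem : MemLp (fun ω => γ * b i ω) 2 P := (hbmem i hi).const_mul γ
    have h1 : Real.sqrt (∫ ω, ‖X (n + 1) i ω - Z (n + 1) i ω‖ ^ 2 ∂P)
        ≤ Real.sqrt (∫ ω, (((1 + γ * L) * ‖X n i ω - Z n i ω‖ + γ * L * S ω)
            + γ * b i ω) ^ 2 ∂P) := by
      refine Real.sqrt_le_sqrt (integral_mono_of_nonneg
        (ae_of_all _ fun ω => sq_nonneg _) (hf1mem.add hf2mem).integrable_sq
        (ae_of_all _ fun ω => ?_))
      exact pow_le_pow_left₀ (norm_nonneg _) (hptw i hi ω) 2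
    have h2 : Real.sqrt (∫ ω, (((1 + γ * L) * ‖X n i ω - Z n i ω‖ + γ * L * S ω)
          + γ * b i ω) ^ 2 ∂P)
        ≤ Real.sqrt (∫ ω, ((1 + γ * L) * ‖X n i ω - Z n i ω‖ + γ * L * S ω) ^ 2 ∂P)
          + Real.sqrt (∫ ω, (γ * b i ω) ^ 2 ∂P) :=
      sqrt_integral_add_sq_le
        (fun ω => by have := hS0 ω; positivity)
        (fun ω => by have := hb0 i ω; positivity) hf1mem hf2mem
    have h3 : Real.sqrt (∫ ω, ((1 + γ * L) * ‖X n i ω - Z n i ω‖ + γ * L * S ω) ^ 2 ∂P)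
        ≤ (1 + γ * L) * Real.sqrt (∫ ω, ‖X n i ω - Z n i ω‖ ^ 2 ∂P)
          + γ * L * Real.sqrt (∫ ω, S ω ^ 2 ∂P) := by
      have hsplit := sqrt_integral_add_sq_le
        (f := fun ω => (1 + γ * L) * ‖X n i ω - Z n i ω‖)
        (g := fun ω => γ * L * S ω)
        (fun ω => by positivity) (fun ω => by have := hS0 ω; positivity)
        ((hΔmem i hi).const_mul (1 + γ * L)) (hSmem.const_mul (γ * L))
      calc Real.sqrt (∫ ω, ((1 + γ * L) * ‖X n i ω - Z n i ω‖ + γ * L * S ω) ^ 2 ∂P)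
          ≤ Real.sqrt (∫ ω, ((1 + γ * L) * ‖X n i ω - Z n i ω‖) ^ 2 ∂P)
            + Real.sqrt (∫ ω, (γ * L * S ω) ^ 2 ∂P) := hsplit
        _ = (1 + γ * L) * Real.sqrt (∫ ω, ‖X n i ω - Z n i ω‖ ^ 2 ∂P)
            + γ * L * Real.sqrt (∫ ω, S ω ^ 2 ∂P) := by
            rw [sqrt_integral_const_mul_sq P _ (by positivity) _,
              sqrt_integral_const_mul_sq P _ (by positivity) _]
    have h4 : Real.sqrt (∫ ω, (γ * b i ω) ^ 2 ∂P)
        = γ * Real.sqrt (∫ ω, b i ω ^ 2 ∂P) :=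
      sqrt_integral_const_mul_sq P _ hγ.le _
    calc Real.sqrt (∫ ω, ‖X (n + 1) i ω - Z (n + 1) i ω‖ ^ 2 ∂P)
        ≤ Real.sqrt (∫ ω, (((1 + γ * L) * ‖X n i ω - Z n i ω‖ + γ * L * S ω)
            + γ * b i ω) ^ 2 ∂P) := h1
      _ ≤ Real.sqrt (∫ ω, ((1 + γ * L) * ‖X n i ω - Z n i ω‖ + γ * L * S ω) ^ 2 ∂P)
          + Real.sqrt (∫ ω, (γ * b i ω) ^ 2 ∂P) := h2
      _ ≤ ((1 + γ * L) * Real.sqrt (∫ ω, ‖X n i ω - Z n i ω‖ ^ 2 ∂P)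
            + γ * L * Real.sqrt (∫ ω, S ω ^ 2 ∂P))
          + γ * Real.sqrt (∫ ω, b i ω ^ 2 ∂P) := by
          rw [← h4]; exact add_le_add_left h3 _
  -- control of S in L²
  have hσ : Real.sqrt (N : ℝ) * Real.sqrt (∫ ω, S ω ^ 2 ∂P)
      ≤ Real.sqrt (∑ j ∈ Finset.range N, ∫ ω, ‖X n j ω - Z n j ω‖ ^ 2 ∂P) := by
    have hptS : ∀ ω, S ω ^ 2
        ≤ (N : ℝ)⁻¹ * ∑ j ∈ Finset.range N, ‖X n j ω - Z n j ω‖ ^ 2 := by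
      intro ω
      have hcs := Finset.sum_mul_sq_le_sq_mul_sq (Finset.range N)
        (fun j => ‖X n j ω - Z n j ω‖) (fun _ => (1 : ℝ))
      have hcs' : (∑ j ∈ Finset.range N, ‖X n j ω - Z n j ω‖) ^ 2
          ≤ (∑ j ∈ Finset.range N, ‖X n j ω - Z n j ω‖ ^ 2) * (N : ℝ) := by
        simpa [Finset.sum_const, Finset.card_range, nsmul_eq_mul] using hcs
      have hS2 : S ω ^ 2
          = (N : ℝ)⁻¹ ^ 2 * (∑ j ∈ Finset.range N, ‖X n j ω - Z n j ω‖) ^ 2 := by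
        simp only [hSdef]; ring
      rw [hS2]
      calc (N : ℝ)⁻¹ ^ 2 * (∑ j ∈ Finset.range N, ‖X n j ω - Z n j ω‖) ^ 2
          ≤ (N : ℝ)⁻¹ ^ 2 * ((∑ j ∈ Finset.range N, ‖X n j ω - Z n j ω‖ ^ 2) * (N : ℝ)) :=
            mul_le_mul_of_nonneg_left hcs' (by positivity)
        _ = (N : ℝ)⁻¹ * ∑ j ∈ Finset.range N, ‖X n j ω - Z n j ω‖ ^ 2 := by
            field_simp
    have hint2 : Integrable
        (fun ω => (N : ℝ)⁻¹ * ∑ j ∈ Finset.range N, ‖X n j ω - Z n j ω‖ ^ 2) P :=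
      (integrable_finset_sum _ fun j hj =>
        hΔint2 j (Finset.mem_range.mp hj)).const_mul _
    have hIS : ∫ ω, S ω ^ 2 ∂P
        ≤ (N : ℝ)⁻¹ * ∑ j ∈ Finset.range N, ∫ ω, ‖X n j ω - Z n j ω‖ ^ 2 ∂P := by
      calc ∫ ω, S ω ^ 2 ∂P
          ≤ ∫ ω, (N : ℝ)⁻¹ * ∑ j ∈ Finset.range N, ‖X n j ω - Z n j ω‖ ^ 2 ∂P :=
            integral_mono_of_nonneg (ae_of_all _ fun ω => sq_nonneg _) hint2
              (ae_of_all _ hptS)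
        _ = (N : ℝ)⁻¹ * ∑ j ∈ Finset.range N, ∫ ω, ‖X n j ω - Z n j ω‖ ^ 2 ∂P := by
            rw [integral_const_mul]
            congr 1
            exact integral_finset_sum _ fun j hj => hΔint2 j (Finset.mem_range.mp hj)
    rw [← Real.sqrt_mul (by positivity : (0:ℝ) ≤ (N : ℝ))]
    refine Real.sqrt_le_sqrt ?_
    calc (N : ℝ) * ∫ ω, S ω ^ 2 ∂P
        ≤ (N : ℝ) * ((N : ℝ)⁻¹ * ∑ j ∈ Finset.range N, ∫ ω, ‖X n j ω - Z n j ω‖ ^ 2 ∂P) :=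
          mul_le_mul_of_nonneg_left hIS (by positivity)
      _ = ∑ j ∈ Finset.range N, ∫ ω, ‖X n j ω - Z n j ω‖ ^ 2 ∂P := by
          field_simp
  -- assemble over the particles
  have hmono : ∀ i ∈ Finset.range N,
      ∫ ω, ‖X (n + 1) i ω - Z (n + 1) i ω‖ ^ 2 ∂P
      ≤ (((1 + γ * L) * Real.sqrt (∫ ω, ‖X n i ω - Z n i ω‖ ^ 2 ∂P)
          + γ * L * Real.sqrt (∫ ω, S ω ^ 2 ∂P))
        + γ * Real.sqrt (∫ ω, b i ω ^ 2 ∂P)) ^ 2 := by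
    intro i hi'
    have hi := Finset.mem_range.mp hi'
    have h0 : 0 ≤ ∫ ω, ‖X (n + 1) i ω - Z (n + 1) i ω‖ ^ 2 ∂P :=
      integral_nonneg fun ω => sq_nonneg _
    have hsq := pow_le_pow_left₀ (Real.sqrt_nonneg _) (hLi i hi) 2
    rwa [Real.sq_sqrt h0] at hsq
  have hT0 : Real.sqrt (∑ i ∈ Finset.range N, ∫ ω, ‖X (n + 1) i ω - Z (n + 1) i ω‖ ^ 2 ∂P)
      ≤ Real.sqrt (∑ i ∈ Finset.range N,
          (((1 + γ * L) * Real.sqrt (∫ ω, ‖X n i ω - Z n i ω‖ ^ 2 ∂P)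
            + γ * L * Real.sqrt (∫ ω, S ω ^ 2 ∂P))
          + γ * Real.sqrt (∫ ω, b i ω ^ 2 ∂P)) ^ 2) :=
    Real.sqrt_le_sqrt (Finset.sum_le_sum hmono)
  have hT1 := sqrt_sum_add_sq_le (s := Finset.range N)
    (fun i => (1 + γ * L) * Real.sqrt (∫ ω, ‖X n i ω - Z n i ω‖ ^ 2 ∂P)
      + γ * L * Real.sqrt (∫ ω, S ω ^ 2 ∂P))
    (fun i => γ * Real.sqrt (∫ ω, b i ω ^ 2 ∂P))
    (fun i => by positivity) (fun i => by positivity)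
  have hT2 := sqrt_sum_add_sq_le (s := Finset.range N)
    (fun i => (1 + γ * L) * Real.sqrt (∫ ω, ‖X n i ω - Z n i ω‖ ^ 2 ∂P))
    (fun i => γ * L * Real.sqrt (∫ ω, S ω ^ 2 ∂P))
    (fun i => by positivity) (fun i => by positivity)
  have hT3 : Real.sqrt (∑ i ∈ Finset.range N,
      ((1 + γ * L) * Real.sqrt (∫ ω, ‖X n i ω - Z n i ω‖ ^ 2 ∂P)) ^ 2)
      = (1 + γ * L) * Real.sqrt (∑ i ∈ Finset.range N,
          Real.sqrt (∫ ω, ‖X n i ω - Z n i ω‖ ^ 2 ∂P) ^ 2) :=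
    sqrt_sum_const_mul_sq _ _ (by positivity) _
  have hT3' : ∑ i ∈ Finset.range N, Real.sqrt (∫ ω, ‖X n i ω - Z n i ω‖ ^ 2 ∂P) ^ 2
      = ∑ i ∈ Finset.range N, ∫ ω, ‖X n i ω - Z n i ω‖ ^ 2 ∂P :=
    Finset.sum_congr rfl fun i _ =>
      Real.sq_sqrt (integral_nonneg fun ω => sq_nonneg _)
  have hT4 : Real.sqrt (∑ _i ∈ Finset.range N,
      (γ * L * Real.sqrt (∫ ω, S ω ^ 2 ∂P)) ^ 2)
      = Real.sqrt (N : ℝ) * (γ * L * Real.sqrt (∫ ω, S ω ^ 2 ∂P)) := by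
    rw [Finset.sum_const, Finset.card_range, nsmul_eq_mul,
      Real.sqrt_mul (by positivity : (0:ℝ) ≤ (N : ℝ)),
      Real.sqrt_sq (by positivity)]
  have hT5 : Real.sqrt (∑ i ∈ Finset.range N, (γ * Real.sqrt (∫ ω, b i ω ^ 2 ∂P)) ^ 2)
      = γ * Real.sqrt (∑ i ∈ Finset.range N, Real.sqrt (∫ ω, b i ω ^ 2 ∂P) ^ 2) :=
    sqrt_sum_const_mul_sq _ _ hγ.le _
  have hT6 : ∑ i ∈ Finset.range N, Real.sqrt (∫ ω, b i ω ^ 2 ∂P) ^ 2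
      ≤ 12 * L ^ 2 * varMeas ρ := by
    have hvar0 : 0 ≤ varMeas ρ := varMeas_nonneg ρ
    calc ∑ i ∈ Finset.range N, Real.sqrt (∫ ω, b i ω ^ 2 ∂P) ^ 2
        = ∑ i ∈ Finset.range N, ∫ ω, b i ω ^ 2 ∂P :=
          Finset.sum_congr rfl fun i _ =>
            Real.sq_sqrt (integral_nonneg fun ω => sq_nonneg _)
      _ ≤ ∑ _i ∈ Finset.range N, 12 * L ^ 2 * varMeas ρ / N :=
          Finset.sum_le_sum fun i hi => hβ i (Finset.mem_range.mp hi)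
      _ = (N : ℝ) * (12 * L ^ 2 * varMeas ρ / N) := by simp [mul_comm]
      _ = 12 * L ^ 2 * varMeas ρ := by field_simp
  -- final chain
  calc Real.sqrt (∑ i ∈ Finset.range N, ∫ ω, ‖X (n + 1) i ω - Z (n + 1) i ω‖ ^ 2 ∂P)
      ≤ Real.sqrt (∑ i ∈ Finset.range N,
          (((1 + γ * L) * Real.sqrt (∫ ω, ‖X n i ω - Z n i ω‖ ^ 2 ∂P)
            + γ * L * Real.sqrt (∫ ω, S ω ^ 2 ∂P))
          + γ * Real.sqrt (∫ ω, b i ω ^ 2 ∂P)) ^ 2) := hT0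
    _ ≤ Real.sqrt (∑ i ∈ Finset.range N,
          ((1 + γ * L) * Real.sqrt (∫ ω, ‖X n i ω - Z n i ω‖ ^ 2 ∂P)
            + γ * L * Real.sqrt (∫ ω, S ω ^ 2 ∂P)) ^ 2)
        + Real.sqrt (∑ i ∈ Finset.range N, (γ * Real.sqrt (∫ ω, b i ω ^ 2 ∂P)) ^ 2) := hT1
    _ ≤ (Real.sqrt (∑ i ∈ Finset.range N,
          ((1 + γ * L) * Real.sqrt (∫ ω, ‖X n i ω - Z n i ω‖ ^ 2 ∂P)) ^ 2)
        + Real.sqrt (∑ _i ∈ Finset.range N,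
            (γ * L * Real.sqrt (∫ ω, S ω ^ 2 ∂P)) ^ 2))
        + Real.sqrt (∑ i ∈ Finset.range N, (γ * Real.sqrt (∫ ω, b i ω ^ 2 ∂P)) ^ 2) :=
        add_le_add_left hT2 _
    _ ≤ ((1 + γ * L) * Real.sqrt (∑ i ∈ Finset.range N, ∫ ω, ‖X n i ω - Z n i ω‖ ^ 2 ∂P)
          + γ * L * Real.sqrt (∑ i ∈ Finset.range N, ∫ ω, ‖X n i ω - Z n i ω‖ ^ 2 ∂P))
        + γ * Real.sqrt (12 * L ^ 2 * varMeas ρ) := by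
        refine add_le_add (add_le_add ?_ ?_) ?_
        · rw [hT3, hT3']
        · rw [hT4]
          calc Real.sqrt (N : ℝ) * (γ * L * Real.sqrt (∫ ω, S ω ^ 2 ∂P))
              = γ * L * (Real.sqrt (N : ℝ) * Real.sqrt (∫ ω, S ω ^ 2 ∂P)) := by ring
            _ ≤ γ * L * Real.sqrt (∑ j ∈ Finset.range N,
                  ∫ ω, ‖X n j ω - Z n j ω‖ ^ 2 ∂P) :=
                mul_le_mul_of_nonneg_left hσ (by positivity)
        · rw [hT5]
          exact mul_le_mul_of_nonneg_left (Real.sqrt_le_sqrt hT6) hγ.le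
    _ = (1 + 2 * γ * L) * Real.sqrt (∑ i ∈ Finset.range N,
          ∫ ω, ‖X n i ω - Z n i ω‖ ^ 2 ∂P)
        + γ * Real.sqrt (12 * L ^ 2 * varMeas ρ) := by ring

end Step


set_option maxHeartbeats 2000000 in
theorem mean_field_limit (B BL CV M : ℝ)
    (hB : 0 < B) (hBL : 0 < BL) (hCV : 0 < CV) (hM : 0 < M) :
    ∃ A : ℝ, 0 < A ∧
      ∀ (d : ℕ), 0 < d →
      ∀ (k : Euc d → Euc d → ℝ) (gk : Euc d → Euc d → Euc d),
        KernelAssumptions B BL k gk →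
      ∀ (h : Euc d → Euc d), PotGrad CV M h →
      ∀ γ : ℝ, 0 < γ →
      ∀ (ρ₀ : Measure (Euc d)), IsProbabilityMeasure ρ₀ →
        Integrable (fun x => ‖x‖ ^ 2) ρ₀ →
      ∀ T : ℝ, 0 < T →
      ∀ N : ℕ, 2 ≤ N →
      ∀ (Ω : Type) [MeasurableSpace Ω] (P : Measure Ω) [IsProbabilityMeasure P],
      ∀ X Z : ℕ → ℕ → Ω → Euc d,
        IsInteracting γ k gk h ρ₀ N P X →
        (∀ j < N, ∀ ω, Z 0 j ω = X 0 j ω) →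
        (∀ n, ∀ j < N, ∀ ω, Z (n + 1) j ω =
            Z n j ω - γ • drift k gk h (mfSeq γ k gk h ρ₀ n) (Z n j ω)) →
      ∀ n : ℕ, (n : ℝ) * γ ≤ T →
        Real.sqrt ((1 / (N : ℝ)) * ∑ j ∈ Finset.range N, ∫ ω, ‖X n j ω - Z n j ω‖ ^ 2 ∂P) ≤
          (1 / 2) * (Real.sqrt (varMeas ρ₀) / Real.sqrt (N : ℝ)) * Real.exp (A * T) *
            (Real.exp (2 * A * T) - 1) := by
  have hA : 0 < 4 * (BL * (CV + 1) + B * M) := by nlinarith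
  refine ⟨4 * (BL * (CV + 1) + B * M), hA, ?_⟩
  intro d hd k gk hk h hh γ hγ ρ₀ hρ₀prob hρ₀int T hT N hN Ω mΩ P hPprob X Z hX hZ0 hZrec n hnT
  haveI := hρ₀prob
  obtain ⟨hXm, hXind, hXlaw, hXrec⟩ := hX
  set L := BL * (CV + 1) + B * M with hLdef
  have hL : 0 < L := by nlinarith
  have hB0 := hB.le; have hBL0 := hBL.le; have hCV0 := hCV.le; have hM0 := hM.le
  have hNpos : 0 < N := lt_of_lt_of_le (by norm_num) hN
  have hNR : (0 : ℝ) < (N : ℝ) := by exact_mod_cast hNpos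
  have hρ₀2 : MemLp id 2 ρ₀ :=
    (memLp_two_iff_integrable_sq_norm aestronglyMeasurable_id).mpr (by simpa using hρ₀int)
  have hmf := mf_facts hB0 hBL0 hCV0 hM0 hk hh γ ρ₀ hρ₀2
  have hzc := zeta_cont hB0 hBL0 hCV0 hM0 hk hh γ ρ₀ hρ₀2
  have hZeq : ∀ m, ∀ j < N, ∀ ω, Z m j ω = zeta k gk h γ ρ₀ m (X 0 j ω) := by
    intro m
    induction m with
    | zero => intro j hj ω; rw [hZ0 j hj ω]; rfl
    | succ m ih => intro j hj ω; rw [hZrec m j hj ω, ih j hj ω]; rfl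
  have hZfun : ∀ m, ∀ j < N, Z m j = fun ω => zeta k gk h γ ρ₀ m (X 0 j ω) :=
    fun m j hj => funext fun ω => hZeq m j hj ω
  have hZm : ∀ m, ∀ j < N, Measurable (Z m j) := by
    intro m j hj
    rw [hZfun m j hj]
    exact (hzc m).measurable.comp (hXm 0 j)
  have hZlaw : ∀ m, ∀ j < N, P.map (Z m j) = mfSeq γ k gk h ρ₀ m := by
    intro m j hj
    rw [hZfun m j hj]
    have heq : (fun ω => zeta k gk h γ ρ₀ m (X 0 j ω)) = (zeta k gk h γ ρ₀ m) ∘ (X 0 j) := rfl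
    rw [heq, ← Measure.map_map (hzc m).measurable (hXm 0 j), hXlaw j hj,
      map_zeta hB0 hBL0 hCV0 hM0 hk hh γ ρ₀ hρ₀2 m]
  have hZind : ∀ m, iIndepFun
      (fun j : Fin N => Z m j) P := by
    intro m
    have hcomp := hXind.comp (fun _ : Fin N => zeta k gk h γ ρ₀ m)
      (fun _ => (hzc m).measurable)
    have heq : (fun j : Fin N => Z m (j : ℕ))
        = fun j : Fin N => (zeta k gk h γ ρ₀ m) ∘ (X 0 (j : ℕ)) := by
      funext j
      rw [hZfun m j j.isLt]
      rfl
    rw [heq]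
    exact hcomp
  set C0 : ℝ := B * (CV + 1) with hC0def
  have hC0 : 0 < C0 := by nlinarith
  have hΔb : ∀ m, ∀ j < N, ∀ ω, ‖X m j ω - Z m j ω‖ ≤ (m : ℝ) * (2 * γ * C0) := by
    intro m
    induction m with
    | zero => intro j hj ω; rw [hZ0 j hj ω]; simp
    | succ m ih =>
      intro j hj ω
      haveI := (hmf m).1
      rw [hXrec m j hj ω, hZrec m j hj ω]
      have hdec : (X m j ω - γ • drift k gk h (empMeas N (fun j' => X m j' ω)) (X m j ω))
          - (Z m j ω - γ • drift k gk h (mfSeq γ k gk h ρ₀ m) (Z m j ω))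
          = (X m j ω - Z m j ω)
            - (γ • drift k gk h (empMeas N (fun j' => X m j' ω)) (X m j ω)
              - γ • drift k gk h (mfSeq γ k gk h ρ₀ m) (Z m j ω)) := by abel
      rw [hdec]
      have h1 : ‖γ • drift k gk h (empMeas N (fun j' => X m j' ω)) (X m j ω)‖ ≤ γ * C0 := by
        rw [norm_smul, Real.norm_eq_abs, abs_of_nonneg hγ.le]
        exact mul_le_mul_of_nonneg_left
          (drift_emp_bound hB0 hBL0 hCV0 hM0 hk hh N hNpos _ _) hγ.le
      have h2 : ‖γ • drift k gk h (mfSeq γ k gk h ρ₀ m) (Z m j ω)‖ ≤ γ * C0 := by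
        rw [norm_smul, Real.norm_eq_abs, abs_of_nonneg hγ.le]
        exact mul_le_mul_of_nonneg_left (drift_bound hB0 hCV0 hk hh _ _) hγ.le
      calc ‖(X m j ω - Z m j ω)
          - (γ • drift k gk h (empMeas N (fun j' => X m j' ω)) (X m j ω)
            - γ • drift k gk h (mfSeq γ k gk h ρ₀ m) (Z m j ω))‖
          ≤ ‖X m j ω - Z m j ω‖
            + ‖γ • drift k gk h (empMeas N (fun j' => X m j' ω)) (X m j ω)
              - γ • drift k gk h (mfSeq γ k gk h ρ₀ m) (Z m j ω)‖ := norm_sub_le _ _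
        _ ≤ (m : ℝ) * (2 * γ * C0) + (γ * C0 + γ * C0) :=
            add_le_add (ih j hj ω) ((norm_sub_le _ _).trans (add_le_add h1 h2))
        _ = ((m + 1 : ℕ) : ℝ) * (2 * γ * C0) := by push_cast; ring
  have hstep : ∀ m, Real.sqrt (∑ i ∈ Finset.range N,
      ∫ ω, ‖X (m + 1) i ω - Z (m + 1) i ω‖ ^ 2 ∂P)
      ≤ (1 + 2 * γ * L) * Real.sqrt (∑ i ∈ Finset.range N,
          ∫ ω, ‖X m i ω - Z m i ω‖ ^ 2 ∂P)
        + γ * Real.sqrt (12 * L ^ 2 * varMeas (mfSeq γ k gk h ρ₀ m)) := by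
    intro m
    exact step_bound hB hBL hCV hM hk hh hγ ρ₀ hρ₀2 N hNpos P X Z hXm m
      (hZm m) (hZind m) (hZlaw m) (hXrec m) (hZrec m)
      ((m : ℝ) * (2 * γ * C0)) (by positivity) (hΔb m)
  -- exponential comparison facts
  have hexp1 : ∀ m : ℕ, (m : ℝ) * γ ≤ T → (1 + γ * L) ^ m ≤ Real.exp (L * T) := by
    intro m hm
    have h1 : (1 + γ * L) ≤ Real.exp (γ * L) := by
      have := Real.add_one_le_exp (γ * L); linarith
    calc (1 + γ * L) ^ m ≤ Real.exp (γ * L) ^ m := pow_le_pow_left₀ (by positivity) h1 m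
      _ = Real.exp ((m : ℝ) * (γ * L)) := (Real.exp_nat_mul _ m).symm
      _ ≤ Real.exp (L * T) := by
          apply Real.exp_le_exp.mpr
          calc (m : ℝ) * (γ * L) = ((m : ℝ) * γ) * L := by ring
            _ ≤ T * L := mul_le_mul_of_nonneg_right hm hL.le
            _ = L * T := by ring
  have hexp2 : ∀ m : ℕ, (m : ℝ) * γ ≤ T → (1 + 2 * γ * L) ^ m ≤ Real.exp (2 * L * T) := by
    intro m hm
    have h1 : (1 + 2 * γ * L) ≤ Real.exp (2 * γ * L) := by
      have := Real.add_one_le_exp (2 * γ * L); linarith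
    calc (1 + 2 * γ * L) ^ m ≤ Real.exp (2 * γ * L) ^ m := pow_le_pow_left₀ (by positivity) h1 m
      _ = Real.exp ((m : ℝ) * (2 * γ * L)) := (Real.exp_nat_mul _ m).symm
      _ ≤ Real.exp (2 * L * T) := by
          apply Real.exp_le_exp.mpr
          calc (m : ℝ) * (2 * γ * L) = ((m : ℝ) * γ) * (2 * L) := by ring
            _ ≤ T * (2 * L) := mul_le_mul_of_nonneg_right hm (by positivity)
            _ = 2 * L * T := by ring
  have hvar : ∀ m : ℕ, (m : ℝ) * γ ≤ T →
      Real.sqrt (12 * L ^ 2 * varMeas (mfSeq γ k gk h ρ₀ m))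
        ≤ 4 * L * Real.exp (L * T) * Real.sqrt (varMeas ρ₀) := by
    intro m hm
    have hv := mf_var_le hB0 hBL0 hCV0 hM0 hk hh hγ.le ρ₀ hρ₀2 m
    have hvar0 := varMeas_nonneg ρ₀
    have hpow := hexp1 m hm
    have hpow0 : (0 : ℝ) ≤ (1 + γ * L) ^ m := by positivity
    have hexp0 : (0 : ℝ) < Real.exp (L * T) := Real.exp_pos _
    have hkey2 : 12 * L ^ 2 * varMeas (mfSeq γ k gk h ρ₀ m)
        ≤ (4 * L * Real.exp (L * T)) ^ 2 * varMeas ρ₀ := by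
      calc 12 * L ^ 2 * varMeas (mfSeq γ k gk h ρ₀ m)
          ≤ 12 * L ^ 2 * (((1 + γ * L) ^ m) ^ 2 * varMeas ρ₀) :=
            mul_le_mul_of_nonneg_left hv (by positivity)
        _ ≤ 12 * L ^ 2 * ((Real.exp (L * T)) ^ 2 * varMeas ρ₀) := by
            refine mul_le_mul_of_nonneg_left (mul_le_mul_of_nonneg_right ?_ hvar0)
              (by positivity)
            exact pow_le_pow_left₀ hpow0 hpow 2
        _ ≤ (4 * L * Real.exp (L * T)) ^ 2 * varMeas ρ₀ := by
            nlinarith [mul_nonneg (mul_nonneg (sq_nonneg L) (sq_nonneg (Real.exp (L * T))))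
              hvar0]
    calc Real.sqrt (12 * L ^ 2 * varMeas (mfSeq γ k gk h ρ₀ m))
        ≤ Real.sqrt ((4 * L * Real.exp (L * T)) ^ 2 * varMeas ρ₀) :=
          Real.sqrt_le_sqrt hkey2
      _ = 4 * L * Real.exp (L * T) * Real.sqrt (varMeas ρ₀) := by
          rw [Real.sqrt_mul (sq_nonneg _), Real.sqrt_sq (by positivity)]
  -- the main discrete Gronwall bound
  have key : ∀ m : ℕ, (m : ℝ) * γ ≤ T →
      Real.sqrt (∑ j ∈ Finset.range N, ∫ ω, ‖X m j ω - Z m j ω‖ ^ 2 ∂P)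
        ≤ 2 * Real.exp (L * T) * Real.sqrt (varMeas ρ₀) * ((1 + 2 * γ * L) ^ m - 1) := by
    intro m
    induction m with
    | zero =>
      intro _
      have hz : ∀ j ∈ Finset.range N, ∫ ω, ‖X 0 j ω - Z 0 j ω‖ ^ 2 ∂P = 0 := by
        intro j hj
        have hzz : ∀ ω, ‖X 0 j ω - Z 0 j ω‖ ^ 2 = 0 := fun ω => by
          rw [hZ0 j (Finset.mem_range.mp hj) ω]; simp
        rw [integral_congr_ae (ae_of_all _ hzz)]
        simp
      rw [Finset.sum_congr rfl hz]
      simp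
    | succ m ih =>
      intro hm1
      have hm1' : ((m : ℝ) + 1) * γ ≤ T := by push_cast at hm1; linarith
      have hmγ : (m : ℝ) * γ ≤ T := by nlinarith [hγ.le]
      have hs := hstep m
      have hv := hvar m hmγ
      have hihm := ih hmγ
      calc Real.sqrt (∑ j ∈ Finset.range N, ∫ ω, ‖X (m + 1) j ω - Z (m + 1) j ω‖ ^ 2 ∂P)
          ≤ (1 + 2 * γ * L) * Real.sqrt (∑ i ∈ Finset.range N,
              ∫ ω, ‖X m i ω - Z m i ω‖ ^ 2 ∂P)
            + γ * Real.sqrt (12 * L ^ 2 * varMeas (mfSeq γ k gk h ρ₀ m)) := hs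
        _ ≤ (1 + 2 * γ * L) * (2 * Real.exp (L * T) * Real.sqrt (varMeas ρ₀)
              * ((1 + 2 * γ * L) ^ m - 1))
            + γ * (4 * L * Real.exp (L * T) * Real.sqrt (varMeas ρ₀)) :=
            add_le_add (mul_le_mul_of_nonneg_left hihm (by positivity))
              (mul_le_mul_of_nonneg_left hv hγ.le)
        _ = 2 * Real.exp (L * T) * Real.sqrt (varMeas ρ₀)
            * ((1 + 2 * γ * L) ^ (m + 1) - 1) := by ring
  -- conclusion
  have hkey := key n hnT
  have hfin1 : (1 + 2 * γ * L) ^ n ≤ Real.exp (2 * L * T) := hexp2 n hnT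
  have hbound : Real.sqrt (∑ j ∈ Finset.range N, ∫ ω, ‖X n j ω - Z n j ω‖ ^ 2 ∂P)
      ≤ 2 * Real.exp (L * T) * Real.sqrt (varMeas ρ₀) * (Real.exp (2 * L * T) - 1) := by
    refine hkey.trans (mul_le_mul_of_nonneg_left (by linarith) (by positivity))
  have hgoal : Real.sqrt ((1 / (N : ℝ)) * ∑ j ∈ Finset.range N,
      ∫ ω, ‖X n j ω - Z n j ω‖ ^ 2 ∂P)
      = Real.sqrt (1 / (N : ℝ)) * Real.sqrt (∑ j ∈ Finset.range N,
          ∫ ω, ‖X n j ω - Z n j ω‖ ^ 2 ∂P) := Real.sqrt_mul (by positivity) _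
  rw [hgoal]
  set p := Real.exp (L * T) with hpdef
  have hppos : (0 : ℝ) < p := Real.exp_pos _
  have hp1 : 1 ≤ p := by
    have := Real.add_one_le_exp (L * T)
    have hLT : 0 ≤ L * T := by positivity
    rw [hpdef]; linarith
  have he2 : Real.exp (2 * L * T) = p ^ 2 := by
    rw [hpdef, show (2 : ℝ) * L * T = ((2 : ℕ) : ℝ) * (L * T) by push_cast; ring,
      Real.exp_nat_mul]
  have hA1 : Real.exp (4 * L * T) = p ^ 4 := by
    rw [hpdef, show (4 : ℝ) * L * T = ((4 : ℕ) : ℝ) * (L * T) by push_cast; ring,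
      Real.exp_nat_mul]
  have hA2 : Real.exp (2 * (4 * L) * T) = p ^ 8 := by
    rw [hpdef, show (2 : ℝ) * (4 * L) * T = ((8 : ℕ) : ℝ) * (L * T) by push_cast; ring,
      Real.exp_nat_mul]
  have hsqrtN : Real.sqrt (1 / (N : ℝ)) = 1 / Real.sqrt (N : ℝ) := by
    rw [one_div, one_div, Real.sqrt_inv]
  have hpn : ∀ nn : ℕ, 1 ≤ p ^ nn := fun nn => by
    calc (1 : ℝ) = 1 ^ nn := (one_pow nn).symm
      _ ≤ p ^ nn := pow_le_pow_left₀ zero_le_one hp1 nn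
  have hp2 : 1 ≤ p ^ 2 := hpn 2
  have hp4 : 1 ≤ p ^ 4 := hpn 4
  have hp6 : 1 ≤ p ^ 6 := hpn 6
  have h0 : 0 ≤ p ^ 2 - 1 := by linarith
  have hcomp : 2 * p * (p ^ 2 - 1) ≤ (1 / 2) * p ^ 4 * (p ^ 8 - 1) := by
    have hfac : p ^ 8 - 1 = (p ^ 2 - 1) * (p ^ 6 + p ^ 4 + p ^ 2 + 1) := by ring
    have hge : (4 : ℝ) ≤ p ^ 6 + p ^ 4 + p ^ 2 + 1 := by linarith
    have hp_le : 2 * p ≤ 2 * p ^ 4 := by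
      have hfact : p ^ 4 - p = p * (p - 1) * (p ^ 2 + p + 1) := by ring
      have hnn : 0 ≤ p * (p - 1) * (p ^ 2 + p + 1) := by
        refine mul_nonneg (mul_nonneg hppos.le (by linarith)) (by positivity)
      linarith [hfact ▸ hnn]
    calc 2 * p * (p ^ 2 - 1) ≤ 2 * p ^ 4 * (p ^ 2 - 1) :=
          mul_le_mul_of_nonneg_right hp_le h0
      _ = (1 / 2) * p ^ 4 * ((p ^ 2 - 1) * 4) := by ring
      _ ≤ (1 / 2) * p ^ 4 * ((p ^ 2 - 1) * (p ^ 6 + p ^ 4 + p ^ 2 + 1)) := by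
          refine mul_le_mul_of_nonneg_left (mul_le_mul_of_nonneg_left hge h0)
            (by positivity)
      _ = (1 / 2) * p ^ 4 * (p ^ 8 - 1) := by rw [← hfac]
  rw [he2] at hbound
  have hq0 : (0 : ℝ) ≤ Real.sqrt (varMeas ρ₀) / Real.sqrt (N : ℝ) := by positivity
  calc Real.sqrt (1 / (N : ℝ)) * Real.sqrt (∑ j ∈ Finset.range N,
        ∫ ω, ‖X n j ω - Z n j ω‖ ^ 2 ∂P)
      ≤ Real.sqrt (1 / (N : ℝ)) * (2 * p * Real.sqrt (varMeas ρ₀) * (p ^ 2 - 1)) :=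
        mul_le_mul_of_nonneg_left hbound (Real.sqrt_nonneg _)
    _ ≤ Real.sqrt (1 / (N : ℝ)) * (Real.sqrt (varMeas ρ₀) * ((1 / 2) * p ^ 4 * (p ^ 8 - 1))) := by
        refine mul_le_mul_of_nonneg_left ?_ (Real.sqrt_nonneg _)
        calc 2 * p * Real.sqrt (varMeas ρ₀) * (p ^ 2 - 1)
            = Real.sqrt (varMeas ρ₀) * (2 * p * (p ^ 2 - 1)) := by ring
          _ ≤ Real.sqrt (varMeas ρ₀) * ((1 / 2) * p ^ 4 * (p ^ 8 - 1)) :=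
              mul_le_mul_of_nonneg_left hcomp (Real.sqrt_nonneg _)
    _ = (1 / 2) * (Real.sqrt (varMeas ρ₀) / Real.sqrt (N : ℝ)) * Real.exp (4 * L * T)
        * (Real.exp (2 * (4 * L) * T) - 1) := by
        rw [hA1, hA2, hsqrtN]
        ring

end
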